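/- arXiv:1608.03353 — 4 statements merged into one kernel-verified Lean document; each statement's English description precedes it below -/
import Mathlib

section
/- Let A be a σ-subnormal subgroup of a finite group G. If A is σ-soluble with σ-nilpotent length l_σ(A) ≤ n, then A ≤ F_{nσ}(G), the n-th term of the upper σ-nilpotent series of G. -/
open Pointwise

section SigmaDefs

variable {ι : Type*}

/-- `σ` is a partition of the set of all primes into pairwise disjoint nonempty sets. -/
def IsPrimePartition (σ : ι → Set ℕ) : Prop :=
  (∀ i, ∀ p ∈ σ i, Nat.Prime p) ∧ (∀ i, (σ i).Nonempty) ∧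
    (∀ i j, i ≠ j → Disjoint (σ i) (σ j)) ∧
    (∀ p : ℕ, Nat.Prime p → ∃ i, p ∈ σ i)

/-- All primes dividing `n` lie in a single class `σ i`. -/
def IsSigmaPrimaryNat (σ : ι → Set ℕ) (n : ℕ) : Prop :=
  ∃ i, ∀ p : ℕ, Nat.Prime p → p ∣ n → p ∈ σ i

/-- A group is `σ`-primary if all primes dividing its order lie in a single class of `σ`. -/
def IsSigmaPrimary (σ : ι → Set ℕ) (G : Type*) [Group G] : Prop :=
  IsSigmaPrimaryNat σ (Nat.card G)

/-- A group is `σ`-nilpotent if it is the (internal) direct product of finitely many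
normal `σ`-primary subgroups. -/
def SigmaNilpotent (σ : ι → Set ℕ) (G : Type*) [Group G] : Prop :=
  ∃ (k : ℕ) (N : Fin k → Subgroup G),
    (∀ t, (N t).Normal) ∧ (∀ t, IsSigmaPrimary σ ↥(N t)) ∧
      (∀ t, Disjoint (N t) (⨆ s, ⨆ _ : s ≠ t, N s)) ∧ (⨆ t, N t) = ⊤

/-- `H/K` is a chief factor of `G`: both are normal in `G`, `K < H`, and no normal
subgroup of `G` lies strictly between them. -/
def IsChiefFactor (G : Type*) [Group G] (K H : Subgroup G) : Prop :=
  K.Normal ∧ H.Normal ∧ K < H ∧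
    ∀ L : Subgroup G, L.Normal → K ≤ L → L ≤ H → L = K ∨ L = H

/-- A group is `σ`-soluble if every chief factor is `σ`-primary
(the order of the factor `H/K` is `K.relindex H`). -/
def SigmaSoluble (σ : ι → Set ℕ) (G : Type*) [Group G] : Prop :=
  ∀ K H : Subgroup G, IsChiefFactor G K H → IsSigmaPrimaryNat σ (K.relIndex H)

/-- `A` is `σ`-subnormal in `G`: there is a chain `A = A₀ ≤ A₁ ≤ ⋯ ≤ A_t = G` such that
each `A_{j}` is normal in `A_{j+1}` or `A_{j+1}/(A_j)_{A_{j+1}}` is `σ`-primary. -/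
def SigmaSubnormal (σ : ι → Set ℕ) {G : Type*} [Group G] (A : Subgroup G) : Prop :=
  ∃ (t : ℕ) (f : Fin (t + 1) → Subgroup G),
    f 0 = A ∧ f (Fin.last t) = ⊤ ∧
      ∀ j : Fin t, f j.castSucc ≤ f j.succ ∧
        (((f j.castSucc).subgroupOf (f j.succ)).Normal ∨
          IsSigmaPrimaryNat σ (((f j.castSucc).subgroupOf (f j.succ)).normalCore.index))

/-- `M` is a maximal subgroup of `K` (inside the ambient group `G`). -/
def MaximalIn {G : Type*} [Group G] (M K : Subgroup G) : Prop :=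
  M < K ∧ ∀ L : Subgroup G, M < L → L ≤ K → L = K

/-- `H` is an `n`-maximal subgroup of `G`:
there is a chain `H = M_n < ⋯ < M_1 < M_0 = G` with each term maximal in the previous one. -/
def IsNMaximal {G : Type*} [Group G] : ℕ → Subgroup G → Prop
  | 0, H => H = ⊤
  | n + 1, H => ∃ K : Subgroup G, IsNMaximal n K ∧ MaximalIn H K

/-- `m_σ(G) = n`: every `n`-maximal subgroup of `G` is `σ`-subnormal in `G`, but
(when `n > 1`) some `(n-1)`-maximal subgroup is not `σ`-subnormal in `G`. -/
def mSigmaEq (σ : ι → Set ℕ) (G : Type*) [Group G] (n : ℕ) : Prop :=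
  (∀ H : Subgroup G, IsNMaximal n H → SigmaSubnormal σ H) ∧
    (1 < n → ∃ H : Subgroup G, IsNMaximal (n - 1) H ∧ ¬ SigmaSubnormal σ H)

/-- `H` is a Hall `σ i`-subgroup of `G`. -/
def IsHallSigmaSubgroup (σ : ι → Set ℕ) (i : ι) {G : Type*} [Group G] (H : Subgroup G) : Prop :=
  (∀ p : ℕ, Nat.Prime p → p ∣ Nat.card ↥H → p ∈ σ i) ∧
    (∀ p : ℕ, Nat.Prime p → p ∣ H.index → p ∉ σ i)

/-- A complete Hall `σ`-set of `G`: every nontrivial member is a Hall `σ i`-subgroup of `G`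
for some `i`, and for every class `σ i` meeting `π(G)` the set contains exactly one
Hall `σ i`-subgroup of `G`. -/
def IsCompleteHallSigmaSet (σ : ι → Set ℕ) {G : Type*} [Group G] (𝓗 : Set (Subgroup G)) : Prop :=
  (∀ H ∈ 𝓗, H ≠ ⊥ → ∃ i, IsHallSigmaSubgroup σ i H) ∧
    (∀ i : ι, (σ i ∩ {p : ℕ | Nat.Prime p ∧ p ∣ Nat.card G}).Nonempty →
      ∃! H : Subgroup G, H ∈ 𝓗 ∧ IsHallSigmaSubgroup σ i H)

/-- Two subgroups permute: `AB = BA` as subsets. -/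
def PermutesWith {G : Type*} [Group G] (A B : Subgroup G) : Prop :=
  (A : Set G) * (B : Set G) = (B : Set G) * (A : Set G)

/-- `H` is `σ`-quasinormal (`σ`-permutable) in `G`: `G` possesses a complete Hall `σ`-set `𝓗`
with `H Aˣ = Aˣ H` for all `A ∈ 𝓗` and all `x ∈ G`. -/
def SigmaQuasinormal (σ : ι → Set ℕ) {G : Type*} [Group G] (H : Subgroup G) : Prop :=
  ∃ 𝓗 : Set (Subgroup G), IsCompleteHallSigmaSet σ 𝓗 ∧
    ∀ A ∈ 𝓗, ∀ x : G, PermutesWith H (A.map (MulAut.conj x).toMonoidHom)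

/-- `m_{σq}(G) = n`: every `n`-maximal subgroup of `G` is `σ`-quasinormal in `G`, but
(when `n > 1`) some `(n-1)`-maximal subgroup is not `σ`-quasinormal in `G`. -/
def mSigmaQEq (σ : ι → Set ℕ) (G : Type*) [Group G] (n : ℕ) : Prop :=
  (∀ H : Subgroup G, IsNMaximal n H → SigmaQuasinormal σ H) ∧
    (1 < n → ∃ H : Subgroup G, IsNMaximal (n - 1) H ∧ ¬ SigmaQuasinormal σ H)

/-- The rank of the (soluble) group `G` is at most `m`: every chief factor of order `p ^ k`
has `k ≤ m`. -/
def RankLE (G : Type*) [Group G] (m : ℕ) : Prop :=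
  ∀ K H : Subgroup G, IsChiefFactor G K H →
    ∀ p k : ℕ, Nat.Prime p → K.relIndex H = p ^ k → k ≤ m

/-- `H` is S-quasinormal (S-permutable) in `G`: `H` permutes with every Sylow subgroup. -/
def SQuasinormal {G : Type*} [Group G] (H : Subgroup G) : Prop :=
  ∀ p : ℕ, Nat.Prime p → ∀ P : Sylow p G, PermutesWith H (P : Subgroup G)

/-- `A` is subnormal in `G`. -/
def IsSubnormalIn {G : Type*} [Group G] (A : Subgroup G) : Prop :=
  ∃ (t : ℕ) (f : Fin (t + 1) → Subgroup G),
    f 0 = A ∧ f (Fin.last t) = ⊤ ∧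
      ∀ j : Fin t, f j.castSucc ≤ f j.succ ∧ ((f j.castSucc).subgroupOf (f j.succ)).Normal

/-- A Schmidt group: not nilpotent, but all proper subgroups are nilpotent. -/
def IsSchmidt (G : Type*) [Group G] : Prop :=
  ¬ Group.IsNilpotent G ∧ ∀ H : Subgroup G, H ≠ ⊤ → Group.IsNilpotent ↥H

/-- A finite group is supersoluble if every chief factor has prime order. -/
def IsSupersoluble (G : Type*) [Group G] : Prop :=
  ∀ K H : Subgroup G, IsChiefFactor G K H → Nat.Prime (K.relIndex H)

/-- `l_σ(G) ≤ n`: `G` has a normal series of length `n` with `σ`-nilpotent factors. -/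
def SigmaNilpotentLengthLE (σ : ι → Set ℕ) (G : Type*) [Group G] (n : ℕ) : Prop :=
  ∃ f : Fin (n + 1) → Subgroup G,
    Monotone f ∧ f 0 = ⊥ ∧ f (Fin.last n) = ⊤ ∧ (∀ j, (f j).Normal) ∧
      ∀ (j : Fin n), ∀ [inst : (f j.castSucc).Normal],
        SigmaNilpotent σ ↥((f j.succ).map (QuotientGroup.mk' (f j.castSucc)))

/-- The `σ`-Fitting subgroup of `G`: the product (join) of all normal `σ`-nilpotent
subgroups of `G`. -/
def sigmaFitting (σ : ι → Set ℕ) (G : Type*) [Group G] : Subgroup G :=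
  ⨆ N ∈ {N : Subgroup G | N.Normal ∧ SigmaNilpotent σ ↥N}, N

/-- `F` is the `n`-th term `F_{nσ}(G)` of the upper `σ`-nilpotent series of `G`:
`F_{0σ}(G) = 1` and `F_{nσ}(G)/F_{(n-1)σ}(G) = F_σ(G/F_{(n-1)σ}(G))`. -/
def IsUpperSigmaNilpotentSeriesTerm (σ : ι → Set ℕ) (G : Type*) [Group G] :
    ℕ → Subgroup G → Prop
  | 0, F => F = ⊥
  | n + 1, F => ∃ F' : Subgroup G, IsUpperSigmaNilpotentSeriesTerm σ G n F' ∧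
      ∀ [inst : F'.Normal],
        F = Subgroup.comap (QuotientGroup.mk' F') (sigmaFitting σ (G ⧸ F'))

/-- `O_π(G)`: the largest normal subgroup of `G` whose order is a `π`-number
(here realised as the join of all normal `π`-subgroups). -/
def OPi (π : Set ℕ) (G : Type*) [Group G] : Subgroup G :=
  ⨆ N ∈ {N : Subgroup G | N.Normal ∧ ∀ p : ℕ, Nat.Prime p → p ∣ Nat.card ↥N → p ∈ π}, N

/-- `G` is `π`-closed: `O_π(G)` is a Hall `π`-subgroup of `G`, i.e. no prime in `π`
divides its index. -/
def PiClosed (π : Set ℕ) (G : Type*) [Group G] : Prop :=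
  ∀ p : ℕ, Nat.Prime p → p ∣ (OPi π G).index → p ∉ π

/-- The set of primes belonging to the classes of `σ` indexed by `S` (i.e. `∪ Π`). -/
def PiPrimes (σ : ι → Set ℕ) (S : Set ι) : Set ℕ := ⋃ i ∈ S, σ i

/-- `n` and `m` are `σ`-coprime: `σ(n) ∩ σ(m) = ∅`. -/
def SigmaCoprime (σ : ι → Set ℕ) (n m : ℕ) : Prop :=
  ∀ i : ι, ∀ p q : ℕ, Nat.Prime p → Nat.Prime q → p ∣ n → q ∣ m →
    p ∈ σ i → q ∈ σ i → False

/-- `D` is the `σ`-nilpotent residual `G^{𝔑_σ}` of `G`: the smallest normal subgroup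
with `σ`-nilpotent quotient. -/
def IsSigmaNilpotentResidual (σ : ι → Set ℕ) {G : Type*} [Group G] (D : Subgroup G) : Prop :=
  D.Normal ∧
    (∀ [inst : D.Normal], SigmaNilpotent σ (G ⧸ D)) ∧
    (∀ (N : Subgroup G) [inst : N.Normal], SigmaNilpotent σ (G ⧸ N) → D ≤ N)

/-- The chief factor `H/K` is `σ`-central in `G`: the semidirect product
`(H/K) ⋊ (G/C_G(H/K))` is `σ`-primary; since `σ`-primarity depends only on the order,
this is expressed via `|H/K| * |G/C_G(H/K)|`. -/
def SigmaCentralFactor (σ : ι → Set ℕ) {G : Type*} [Group G] (K H : Subgroup G)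
    [K.Normal] : Prop :=
  IsSigmaPrimaryNat σ
    (Nat.card ↥(H.map (QuotientGroup.mk' K)) *
      (Subgroup.centralizer ((H.map (QuotientGroup.mk' K) : Subgroup (G ⧸ K)) : Set (G ⧸ K))).index)

/-- `σ(G)`: the set of classes of `σ` meeting `π(G)`. -/
def sigmaOf (σ : ι → Set ℕ) (G : Type*) [Group G] : Set ι :=
  {i : ι | (σ i ∩ {p : ℕ | Nat.Prime p ∧ p ∣ Nat.card G}).Nonempty}

end SigmaDefs
namespace SigmaHelp

open Subgroup

variable {ι : Type*} {σ : ι → Set ℕ}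

/-- all primes dividing `n` lie in `π` -/
def IsPiNat (π : Set ℕ) (n : ℕ) : Prop := ∀ p : ℕ, Nat.Prime p → p ∣ n → p ∈ π

theorem IsPiNat.of_dvd {π : Set ℕ} {m n : ℕ} (h : m ∣ n) (hn : IsPiNat π n) : IsPiNat π m :=
  fun p pp pd => hn p pp (pd.trans h)

theorem IsPiNat.mul {π : Set ℕ} {m n : ℕ} (hm : IsPiNat π m) (hn : IsPiNat π n) :
    IsPiNat π (m * n) := fun p pp pd => by
  rcases (Nat.Prime.dvd_mul pp).1 pd with h | h
  · exact hm p pp h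
  · exact hn p pp h

theorem isPiNat_one {π : Set ℕ} : IsPiNat π 1 := fun p pp pd =>
  absurd (Nat.eq_one_of_dvd_one pd) pp.ne_one

theorem primary_of_dvd {m n : ℕ} (h : m ∣ n) (hn : IsSigmaPrimaryNat σ n) :
    IsSigmaPrimaryNat σ m := by
  obtain ⟨i, hi⟩ := hn
  exact ⟨i, fun p pp pd => hi p pp (pd.trans h)⟩

section Group

variable {G : Type*} [Group G]

theorem card_map_dvd {H : Type*} [Group H] (f : G →* H) (K : Subgroup G) :
    Nat.card (K.map f) ∣ Nat.card K :=
  Subgroup.card_dvd_of_surjective _ (f.subgroupMap_surjective K)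

theorem card_subgroupOf {A M : Subgroup G} (h : A ≤ M) :
    Nat.card (A.subgroupOf M) = Nat.card A :=
  Nat.card_congr (Subgroup.subgroupOfEquivOfLe h).toEquiv

theorem card_lt_of_ne_top [Finite G] {H : Subgroup G} (h : H ≠ ⊤) :
    Nat.card H < Nat.card G := by
  have hd := Subgroup.card_subgroup_dvd_card H
  rcases lt_or_eq_of_le (Nat.le_of_dvd Nat.card_pos hd) with hlt | heq
  · exact hlt
  · exact absurd (Subgroup.eq_top_of_card_eq H heq) h

theorem card_sup_dvd [Finite G] (H N : Subgroup G) [N.Normal] :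
    Nat.card ↥(H ⊔ N) ∣ Nat.card H * Nat.card N := by
  set J := H ⊔ N with hJ
  have h1 : Nat.card J = Nat.card (↥J ⧸ N.subgroupOf J) * Nat.card (N.subgroupOf J) :=
    Subgroup.card_eq_card_quotient_mul_card_subgroup _
  have h2 : Nat.card (N.subgroupOf J) = Nat.card N := card_subgroupOf le_sup_right
  have h3 : Nat.card (↥J ⧸ N.subgroupOf J) ∣ Nat.card H := by
    apply Subgroup.card_dvd_of_surjective
      ((QuotientGroup.mk' (N.subgroupOf J)).comp (Subgroup.inclusion le_sup_left))
    intro x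
    obtain ⟨j, rfl⟩ := QuotientGroup.mk'_surjective _ x
    have hj : (j : G) ∈ (↑H * ↑N : Set G) := by
      rw [← Subgroup.mul_normal H N]; exact j.2
    obtain ⟨h, hh, n, hn, hhn⟩ := hj
    refine ⟨⟨h, hh⟩, ?_⟩
    have : (QuotientGroup.mk' (N.subgroupOf J)) (Subgroup.inclusion le_sup_left ⟨h, hh⟩) =
        QuotientGroup.mk' (N.subgroupOf J) j := by
      rw [QuotientGroup.mk'_eq_mk']
      refine ⟨⟨n, (le_sup_right : N ≤ H ⊔ N) hn⟩, ?_, ?_⟩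
      · show (n : G) ∈ N; exact hn
      · exact Subtype.ext hhn
    simpa using this
  calc Nat.card ↥J = Nat.card (↥J ⧸ N.subgroupOf J) * Nat.card N := by rw [h1, h2]
    _ ∣ Nat.card H * Nat.card N := Nat.mul_dvd_mul_right h3 _

/-! ### transfer of relative normality / core index along inclusions and surjections -/

/-- inclusion `↥(Y.subgroupOf H) →* ↥Y`. -/
def inclY (Y H : Subgroup G) : ↥(Y.subgroupOf H) →* ↥Y where
  toFun a := ⟨((a : ↥H) : G), a.2⟩
  map_one' := rfl
  map_mul' a b := rfl

theorem subgroupOf_subgroupOf (X Y H : Subgroup G) :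
    (X.subgroupOf H).subgroupOf (Y.subgroupOf H) = (X.subgroupOf Y).comap (inclY Y H) := by
  ext a
  simp [Subgroup.mem_subgroupOf, Subgroup.mem_comap, inclY]

theorem step_normal_subgroupOf {X Y : Subgroup G} (H : Subgroup G)
    (h : (X.subgroupOf Y).Normal) :
    ((X.subgroupOf H).subgroupOf (Y.subgroupOf H)).Normal := by
  rw [subgroupOf_subgroupOf]
  exact h.comap _

theorem step_core_dvd_subgroupOf (X Y H : Subgroup G) :
    ((X.subgroupOf H).subgroupOf (Y.subgroupOf H)).normalCore.index ∣
      (X.subgroupOf Y).normalCore.index := by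
  rw [subgroupOf_subgroupOf]
  set c := (X.subgroupOf Y).normalCore with hc
  have h1 : c.comap (inclY Y H) ≤ ((X.subgroupOf Y).comap (inclY Y H)).normalCore := by
    haveI : (c.comap (inclY Y H)).Normal := (Subgroup.normalCore_normal _).comap _
    exact Subgroup.normal_le_normalCore.mpr (Subgroup.comap_mono (Subgroup.normalCore_le _))
  calc ((X.subgroupOf Y).comap (inclY Y H)).normalCore.index
      ∣ (c.comap (inclY Y H)).index := Subgroup.index_dvd_of_le h1
    _ = c.relIndex (inclY Y H).range := Subgroup.index_comap c (inclY Y H)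
    _ ∣ c.index := Subgroup.relIndex_dvd_index_of_normal c _

theorem map_subgroupOf_map {G₂ : Type*} [Group G₂] (φ : G →* G₂) {X Y : Subgroup G}
    (hXY : X ≤ Y) :
    (X.map φ).subgroupOf (Y.map φ) = (X.subgroupOf Y).map (φ.subgroupMap Y) := by
  ext z
  simp only [Subgroup.mem_subgroupOf, Subgroup.mem_map]
  constructor
  · rintro ⟨x, hx, hfx⟩
    refine ⟨⟨x, hXY hx⟩, by simpa [Subgroup.mem_subgroupOf] using hx, Subtype.ext ?_⟩
    exact hfx
  · rintro ⟨a, ha, hψ⟩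
    refine ⟨(a : G), by simpa [Subgroup.mem_subgroupOf] using ha, ?_⟩
    exact congrArg Subtype.val hψ

theorem step_normal_map {G₂ : Type*} [Group G₂] (φ : G →* G₂) {X Y : Subgroup G}
    (hXY : X ≤ Y) (h : (X.subgroupOf Y).Normal) :
    ((X.map φ).subgroupOf (Y.map φ)).Normal := by
  rw [map_subgroupOf_map φ hXY]
  exact h.map _ (φ.subgroupMap_surjective Y)

theorem step_core_dvd_map {G₂ : Type*} [Group G₂] (φ : G →* G₂) {X Y : Subgroup G}
    (hXY : X ≤ Y) :
    ((X.map φ).subgroupOf (Y.map φ)).normalCore.index ∣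
      (X.subgroupOf Y).normalCore.index := by
  rw [map_subgroupOf_map φ hXY]
  set c := (X.subgroupOf Y).normalCore with hc
  have hsurj := φ.subgroupMap_surjective Y
  have h1 : c.map (φ.subgroupMap Y) ≤ ((X.subgroupOf Y).map (φ.subgroupMap Y)).normalCore := by
    haveI : (c.map (φ.subgroupMap Y)).Normal :=
      (Subgroup.normalCore_normal _).map _ hsurj
    exact Subgroup.normal_le_normalCore.mpr (Subgroup.map_mono (Subgroup.normalCore_le _))
  calc ((X.subgroupOf Y).map (φ.subgroupMap Y)).normalCore.index
      ∣ (c.map (φ.subgroupMap Y)).index := Subgroup.index_dvd_of_le h1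
    _ ∣ c.index := c.index_map_dvd hsurj

end Group

end SigmaHelp
namespace SigmaHelp

open Subgroup

variable {ι : Type*} {σ : ι → Set ℕ} {G : Type*} [Group G]

theorem chain_le {t : ℕ} {f : Fin (t + 1) → Subgroup G}
    (hstep : ∀ j : Fin t, f j.castSucc ≤ f j.succ) (j : Fin (t + 1)) : f 0 ≤ f j := by
  induction j using Fin.induction with
  | zero => exact le_rfl
  | succ k ih => exact ih.trans (hstep k)

theorem sn_of_le {A H : Subgroup G} (hA : SigmaSubnormal σ A) (hAH : A ≤ H) :
    SigmaSubnormal σ (A.subgroupOf H) := by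
  obtain ⟨t, f, h0, htop, hstep⟩ := hA
  refine ⟨t, fun j => (f j).subgroupOf H, by simp only [h0], ?_, ?_⟩
  · show (f (Fin.last t)).subgroupOf H = ⊤
    rw [htop]; exact Subgroup.comap_top _
  intro j
  refine ⟨Subgroup.comap_mono (hstep j).1, ?_⟩
  rcases (hstep j).2 with hn | hp
  · exact Or.inl (step_normal_subgroupOf H hn)
  · exact Or.inr (primary_of_dvd (step_core_dvd_subgroupOf _ _ H) hp)

theorem sn_map {G₂ : Type*} [Group G₂] (φ : G →* G₂) (hφ : Function.Surjective φ)
    {A : Subgroup G} (hA : SigmaSubnormal σ A) : SigmaSubnormal σ (A.map φ) := by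
  obtain ⟨t, f, h0, htop, hstep⟩ := hA
  refine ⟨t, fun j => (f j).map φ, by simp only [h0], ?_, ?_⟩
  · show (f (Fin.last t)).map φ = ⊤
    rw [htop, ← MonoidHom.range_eq_map, MonoidHom.range_eq_top]; exact hφ
  · intro j
    refine ⟨Subgroup.map_mono (hstep j).1, ?_⟩
    rcases (hstep j).2 with hn | hp
    · exact Or.inl (step_normal_map φ (hstep j).1 hn)
    · exact Or.inr (primary_of_dvd (step_core_dvd_map φ (hstep j).1) hp)

theorem sn_prepend {A B : Subgroup G} (hBA : B ≤ A) (hN : (B.subgroupOf A).Normal)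
    (hA : SigmaSubnormal σ A) : SigmaSubnormal σ B := by
  obtain ⟨t, f, h0, htop, hstep⟩ := hA
  refine ⟨t + 1, Fin.cases B f, by simp only [Fin.cases_zero], ?_, ?_⟩
  · have h : Fin.last (t + 1) = (Fin.last t).succ := rfl
    simp only [h, Fin.cases_succ, htop]
  · intro j
    induction j using Fin.cases with
    | zero =>
      have e1 : ((0 : Fin (t + 1)).castSucc : Fin (t+2)) = 0 := rfl
      simp only [e1, Fin.cases_succ, Fin.cases_zero, h0]
      exact ⟨hBA, Or.inl (by subst h0; exact hN)⟩
    | succ k =>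
      have e1 : ((k.succ).castSucc : Fin (t+2)) = (k.castSucc : Fin (t+1)).succ :=
        (Fin.succ_castSucc k).symm
      simp only [e1, Fin.cases_succ]
      exact hstep k

theorem normal_of_subgroupOf_top {M : Subgroup G} (h : (M.subgroupOf (⊤ : Subgroup G)).Normal) :
    M.Normal := by
  constructor
  intro n hn g
  exact (Subgroup.normal_subgroupOf_iff le_top).mp h n g hn trivial

theorem comap_equiv_normalCore {G₂ : Type*} [Group G₂] (e : G₂ ≃* G) (X : Subgroup G) :
    (X.comap e.toMonoidHom).normalCore = X.normalCore.comap e.toMonoidHom := by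
  refine le_antisymm ?_ ?_
  · rw [← Subgroup.map_le_iff_le_comap]
    have h1 : ((X.comap e.toMonoidHom).normalCore.map e.toMonoidHom).Normal :=
      (Subgroup.normalCore_normal _).map _ e.surjective
    refine Subgroup.normal_le_normalCore.mpr ?_
    calc (X.comap e.toMonoidHom).normalCore.map e.toMonoidHom
        ≤ (X.comap e.toMonoidHom).map e.toMonoidHom := Subgroup.map_mono (Subgroup.normalCore_le _)
      _ = X := Subgroup.map_comap_eq_self_of_surjective e.surjective X
  · haveI : (X.normalCore.comap e.toMonoidHom).Normal := (Subgroup.normalCore_normal _).comap _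
    exact Subgroup.normal_le_normalCore.mpr (Subgroup.comap_mono (Subgroup.normalCore_le _))

theorem index_comap_equiv {G₂ : Type*} [Group G₂] (e : G₂ ≃* G) (X : Subgroup G) :
    (X.comap e.toMonoidHom).index = X.index := by
  rw [Subgroup.index_comap, MonoidHom.range_eq_top.mpr e.surjective, Subgroup.relIndex_top_right]

theorem coreIndex_top (M : Subgroup G) :
    (M.subgroupOf (⊤ : Subgroup G)).normalCore.index = M.normalCore.index := by
  have h : M.subgroupOf (⊤ : Subgroup G) = M.comap (Subgroup.topEquiv (G := G)).toMonoidHom := by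
    rfl
  rw [h, comap_equiv_normalCore, index_comap_equiv]

end SigmaHelp
namespace SigmaHelp

open Subgroup

variable {ι : Type*} {σ : ι → Set ℕ} {G : Type*} [Group G]

theorem conj_map_eq {N : Subgroup G} (hN : N.Normal) (g : G) :
    N.map (MulAut.conj g).toMonoidHom = N := by
  ext x
  simp only [Subgroup.mem_map, MulEquiv.coe_toMonoidHom, MulAut.conj_apply]
  constructor
  · rintro ⟨y, hy, rfl⟩
    exact hN.conj_mem y hy g
  · intro hx
    refine ⟨g⁻¹ * x * g, by simpa using hN.conj_mem x hx g⁻¹, by group⟩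

theorem normal_biSup {S : Set (Subgroup G)} (hS : ∀ N ∈ S, N.Normal) :
    (⨆ N ∈ S, N).Normal := by
  constructor
  intro n hn g
  have hmap : Subgroup.map (MulAut.conj g).toMonoidHom (⨆ N ∈ S, N) = ⨆ N ∈ S, N := by
    rw [Subgroup.map_iSup]
    refine iSup_congr fun N => ?_
    rw [Subgroup.map_iSup]
    exact iSup_congr fun hN => conj_map_eq (hS N hN) g
  rw [← hmap]
  exact Subgroup.mem_map.mpr ⟨n, hn, by simp [MulAut.conj_apply]⟩

theorem le_OPi {π : Set ℕ} {N : Subgroup G} (hN : N.Normal)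
    (hpi : IsPiNat π (Nat.card N)) : N ≤ OPi π G :=
  le_iSup₂ (f := fun (N : Subgroup G) (_ : N ∈ {N : Subgroup G | N.Normal ∧
    ∀ p : ℕ, Nat.Prime p → p ∣ Nat.card ↥N → p ∈ π}) => N) N ⟨hN, hpi⟩

theorem OPi_normal {π : Set ℕ} : (OPi π G).Normal :=
  normal_biSup fun _ hN => hN.1

theorem isPiNat_card_OPi {π : Set ℕ} [Finite G] : IsPiNat π (Nat.card (OPi π G)) := by
  haveI : Finite (Subgroup G) := Finite.of_injective _ (SetLike.coe_injective (A := Subgroup G))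
  have main : ∀ S : Set (Subgroup G), (∀ N ∈ S, N.Normal ∧ IsPiNat π (Nat.card N)) →
      (sSup S).Normal ∧ IsPiNat π (Nat.card ↥(sSup S)) := by
    intro S
    refine Set.Finite.induction_on (motive := fun (S : Set (Subgroup G)) _ => (∀ N ∈ S, N.Normal ∧ IsPiNat π (Nat.card ↥N)) →
      (sSup S).Normal ∧ IsPiNat π (Nat.card ↥(sSup S))) S (Set.toFinite S) ?_ ?_
    · intro _
      constructor
      · rw [sSup_empty]; infer_instance
      · rw [sSup_empty]
        have hb : Nat.card (⊥ : Subgroup G) = 1 := Subgroup.card_bot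
        rw [hb]; exact isPiNat_one
    · intro a s ha hs ih hmem
      have hihs := ih (fun N hN => hmem N (Set.mem_insert_of_mem a hN))
      have hA := hmem a (Set.mem_insert a s)
      haveI hnormS : (sSup s).Normal := hihs.1
      haveI hnormA : a.Normal := hA.1
      rw [sSup_insert]
      refine ⟨Subgroup.sup_normal a (sSup s), ?_⟩
      exact IsPiNat.of_dvd (card_sup_dvd a (sSup s)) (hA.2.mul hihs.2)
  have : OPi π G = sSup {N : Subgroup G | N.Normal ∧
      ∀ p : ℕ, Nat.Prime p → p ∣ Nat.card ↥N → p ∈ π} := by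
    rw [sSup_eq_iSup]; rfl
  rw [this]
  exact (main _ fun N hN => hN).2

theorem OPi_map_le {π : Set ℕ} {G₂ : Type*} [Group G₂] (e : G ≃* G₂) :
    (OPi π G).map e.toMonoidHom ≤ OPi π G₂ := by
  rw [OPi, Subgroup.map_iSup]
  refine iSup_le fun N => ?_
  rw [Subgroup.map_iSup]
  exact iSup_le fun hN => le_OPi (hN.1.map _ e.surjective)
    (IsPiNat.of_dvd (card_map_dvd _ N) hN.2)

theorem OPi_map_equiv {π : Set ℕ} {G₂ : Type*} [Group G₂] (e : G ≃* G₂) :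
    (OPi π G).map e.toMonoidHom = OPi π G₂ := by
  refine le_antisymm (OPi_map_le e) ?_
  have h1 := Subgroup.map_mono (f := e.toMonoidHom) (OPi_map_le (π := π) e.symm)
  rwa [Subgroup.map_map, show e.toMonoidHom.comp e.symm.toMonoidHom = MonoidHom.id G₂ from
    MonoidHom.ext fun x => e.apply_symm_apply x, Subgroup.map_id] at h1

theorem OPi_map_subtype_normal {π : Set ℕ} (C : Subgroup G) [C.Normal] :
    ((OPi π ↥C).map C.subtype).Normal := by
  constructor
  intro n hn g
  obtain ⟨c, hc, rfl⟩ := Subgroup.mem_map.mp hn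
  have h1 : (MulAut.conjNormal g : MulAut ↥C) c ∈ OPi π ↥C := by
    rw [← OPi_map_equiv (π := π) ((MulAut.conjNormal g : MulAut ↥C) : ↥C ≃* ↥C)]
    exact ⟨c, hc, rfl⟩
  exact Subgroup.mem_map.mpr ⟨_, h1, MulAut.conjNormal_apply g c⟩

theorem sigmaFitting_normal : (sigmaFitting σ G).Normal :=
  normal_biSup fun _ hN => hN.1

theorem sigmaNilpotent_of_primary (h : IsSigmaPrimary σ G) : SigmaNilpotent σ G := by
  refine ⟨1, fun _ => ⊤, fun _ => inferInstance, fun t => ?_, fun t => ?_, by simp⟩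
  · show IsSigmaPrimaryNat σ (Nat.card ↥(⊤ : Subgroup G))
    have hc : Nat.card ↥(⊤ : Subgroup G) = Nat.card G := Subgroup.card_top
    rw [hc]; exact h
  · have hbot : (⨆ s : Fin 1, ⨆ _ : s ≠ t, (⊤ : Subgroup G)) = ⊥ :=
      le_bot_iff.mp (iSup_le fun s => iSup_le fun hs => absurd (Subsingleton.elim s t) hs)
    rw [hbot]
    exact disjoint_bot_right

theorem OPi_le_fitting [Finite G] (i : ι) : OPi (σ i) G ≤ sigmaFitting σ G :=
  le_iSup₂ (f := fun (N : Subgroup G) (_ : N ∈ {N : Subgroup G | N.Normal ∧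
      SigmaNilpotent σ ↥N}) => N) (OPi (σ i) G)
    ⟨OPi_normal, sigmaNilpotent_of_primary ⟨i, isPiNat_card_OPi⟩⟩

end SigmaHelp
namespace SigmaHelp

open Subgroup

universe u

variable {ι : Type*}

theorem O_lemma {σ : ι → Set ℕ} (hσ : IsPrimePartition σ) :
    ∀ (n : ℕ) (G : Type u) [Group G] [Finite G] (i : ι) (A : Subgroup G),
      Nat.card G ≤ n → SigmaSubnormal σ A → IsPiNat (σ i) (Nat.card ↥A) →
      A ≤ OPi (σ i) G := by
  intro n
  induction n with
  | zero =>
    intro G _ _ i A hle _ _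
    have := Nat.card_pos (α := G)
    omega
  | succ n IH =>
    intro G _ _ i A hcard hsn hpi
    obtain ⟨t, f, h0, htop, hstep⟩ := hsn
    subst h0
    induction t with
    | zero =>
      have h1 : f 0 = ⊤ := by rw [show (0 : Fin 1) = Fin.last 0 from rfl, htop]
      rw [h1]
      refine le_OPi inferInstance ?_
      rw [h1] at hpi
      have hc : Nat.card ↥(⊤ : Subgroup G) = Nat.card G := Subgroup.card_top
      rw [hc] at hpi ⊢
      exact hpi
    | succ t IHt =>
      by_cases hM : f (Fin.last t).castSucc = ⊤
      · refine IHt (fun j => f j.castSucc) ?_ ?_ ?_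
        · simpa using hM
        · intro j
          have e1 : ((j.succ : Fin (t+1)).castSucc : Fin (t+2)) = (j.castSucc : Fin (t+1)).succ :=
            (Fin.succ_castSucc j).symm
          have h := hstep j.castSucc
          rw [← e1] at h
          exact h
        · exact hpi
      · set M := f (Fin.last t).castSucc with hMdef
        have hAM : f 0 ≤ M := chain_le (fun j => (hstep j).1) (Fin.last t).castSucc
        have hMlt : Nat.card ↥M ≤ n := by
          have := card_lt_of_ne_top hM
          omega
        have hsnA : SigmaSubnormal σ (f 0) := ⟨t + 1, f, rfl, htop, hstep⟩
        have hsnM : SigmaSubnormal σ ((f 0).subgroupOf M) := sn_of_le hsnA hAM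
        have hpiM : IsPiNat (σ i) (Nat.card ↥((f 0).subgroupOf M)) := by
          rw [card_subgroupOf hAM]; exact hpi
        have hQ' := IH ↥M i _ hMlt hsnM hpiM
        set Q := (OPi (σ i) ↥M).map M.subtype with hQdef
        have hAQ : f 0 ≤ Q := by
          have h1 : ((f 0).subgroupOf M).map M.subtype ≤ Q := Subgroup.map_mono hQ'
          rwa [Subgroup.subgroupOf_map_subtype, inf_of_le_left hAM] at h1
        have hQpi : IsPiNat (σ i) (Nat.card ↥Q) :=
          IsPiNat.of_dvd (card_map_dvd _ _) isPiNat_card_OPi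
        have hft : f (Fin.last t).succ = ⊤ := by
          rw [show (Fin.last t).succ = Fin.last (t + 1) from rfl, htop]
        have hlast := (hstep (Fin.last t)).2
        rw [hft] at hlast
        rcases hlast with hn | hp
        · have hMn : M.Normal := normal_of_subgroupOf_top hn
          haveI := hMn
          exact hAQ.trans (le_OPi (OPi_map_subtype_normal M) hQpi)
        · obtain ⟨k, hk0⟩ := hp
          have hk : IsPiNat (σ k) M.normalCore.index := by
            have h1 : IsPiNat (σ k)
                ((M.subgroupOf (⊤ : Subgroup G)).normalCore.index) := hk0
            rwa [coreIndex_top] at h1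
          set C := M.normalCore with hCdef
          haveI hCn : C.Normal := Subgroup.normalCore_normal M
          by_cases hA0 : f 0 = ⊥
          · rw [hA0]; exact bot_le
          have hCM : C ≤ M := Subgroup.normalCore_le M
          have hCtop : C ≠ ⊤ := fun h => hM (top_le_iff.mp (h ▸ hCM))
          by_cases hik : i = k
          · subst hik
            set P := OPi (σ i) G with hPdef
            by_cases hP : P = ⊥
            · -- Schur–Zassenhaus endgame
              have hkill : ∀ N : Subgroup G, N.Normal → IsPiNat (σ i) (Nat.card ↥N) →
                  N = ⊥ := fun N h1 h2 => le_bot_iff.mp (hP ▸ le_OPi h1 h2)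
              have hQM : ∀ m ∈ M, ∀ q ∈ Q, m * q * m⁻¹ ∈ Q := by
                intro m hm q hq
                obtain ⟨q', hq', rfl⟩ := Subgroup.mem_map.mp hq
                exact Subgroup.mem_map.mpr
                  ⟨_, (OPi_normal (π := σ i)).conj_mem q' hq' ⟨m, hm⟩, rfl⟩
              have hQC : Q ⊓ C = ⊥ := by
                have hrn : ((Q ⊓ C).subgroupOf C).Normal := by
                  rw [Subgroup.normal_subgroupOf_iff inf_le_right]
                  intro h c hh hc
                  exact ⟨hQM c (hCM hc) h hh.1, hCn.conj_mem h hh.2 c⟩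
                have hsub : (Q ⊓ C).subgroupOf C ≤ OPi (σ i) ↥C :=
                  le_OPi hrn (by
                    rw [card_subgroupOf inf_le_right]
                    exact IsPiNat.of_dvd (Subgroup.card_dvd_of_le inf_le_left) hQpi)
                have h2 : Q ⊓ C ≤ (OPi (σ i) ↥C).map C.subtype := by
                  have h3 := Subgroup.map_mono (f := C.subtype) hsub
                  rwa [Subgroup.subgroupOf_map_subtype, inf_of_le_left inf_le_right] at h3
                have h3 : (OPi (σ i) ↥C).map C.subtype = ⊥ :=
                  hkill _ (OPi_map_subtype_normal C)
                    (IsPiNat.of_dvd (card_map_dvd _ _) isPiNat_card_OPi)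
                exact le_bot_iff.mp (h2.trans_eq h3)
              have hcomm : ∀ q ∈ Q, ∀ c ∈ C, q * c = c * q := by
                intro q hq c hc
                have h1 : q⁻¹ * c⁻¹ * q * c ∈ Q := by
                  have h2 : c⁻¹ * q * c ∈ Q := by
                    have := hQM c⁻¹ (inv_mem (hCM hc)) q hq
                    rwa [inv_inv] at this
                  have := mul_mem (inv_mem hq) h2
                  simpa [mul_assoc] using this
                have h2 : q⁻¹ * c⁻¹ * q * c ∈ C := by
                  have h3 : q⁻¹ * c⁻¹ * q ∈ C := by
                    have := hCn.conj_mem c⁻¹ (inv_mem hc) q⁻¹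
                    simpa [mul_assoc] using this
                  exact mul_mem h3 hc
                have h12 : q⁻¹ * c⁻¹ * q * c ∈ Q ⊓ C := ⟨h1, h2⟩
                rw [hQC] at h12
                have e1 : q⁻¹ * c⁻¹ * q * c = 1 := h12
                have := congrArg (fun x => c * q * x) e1
                simpa [mul_assoc] using this
              set L := Subgroup.centralizer (C : Set G) with hLdef
              have hQL : Q ≤ L := fun q hq =>
                Subgroup.mem_centralizer_iff.mpr fun c hc => (hcomm q hq c hc).symm
              have hLn : L.Normal := by
                constructor
                intro l hl g
                rw [Subgroup.mem_centralizer_iff] at hl ⊢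
                intro c hc
                have hc' : g⁻¹ * c * g ∈ C := by
                  have := hCn.conj_mem c hc g⁻¹
                  simpa [mul_assoc] using this
                have h1 := hl _ hc'
                have := congrArg (fun x => g * x * g⁻¹) h1
                simpa [mul_assoc] using this
              set Z := L ⊓ C with hZdef
              have hZn : Z.Normal :=
                { conj_mem := fun z hz g => ⟨hLn.conj_mem z hz.1 g, hCn.conj_mem z hz.2 g⟩ }
              have hZcomm : ∀ a ∈ Z, ∀ b ∈ Z, a * b = b * a := fun a ha b hb =>
                ((Subgroup.mem_centralizer_iff.mp ha.1) b hb.2).symm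
              set T : Subgroup G :=
                { carrier := {x | x ∈ Z ∧ IsPiNat (σ i) (orderOf x)}
                  one_mem' := ⟨one_mem _, by
                    rw [orderOf_one]
                    exact (isPiNat_one (π := σ i))⟩
                  mul_mem' := by
                    rintro a b ⟨haZ, haO⟩ ⟨hbZ, hbO⟩
                    refine ⟨mul_mem haZ hbZ, ?_⟩
                    have hcom : Commute a b := hZcomm a haZ b hbZ
                    exact IsPiNat.of_dvd
                      (hcom.orderOf_mul_dvd_lcm.trans (Nat.lcm_dvd_mul _ _)) (haO.mul hbO)
                  inv_mem' := by
                    rintro a ⟨haZ, haO⟩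
                    exact ⟨inv_mem haZ, by rw [orderOf_inv]; exact haO⟩ } with hTdef
              have hTn : T.Normal := by
                constructor
                intro x hx g
                refine ⟨hZn.conj_mem x hx.1 g, ?_⟩
                have horder : orderOf (g * x * g⁻¹) = orderOf x := by
                  have h1 := orderOf_injective (MulAut.conj g).toMonoidHom
                    (MulAut.conj g).injective x
                  simpa [MulAut.conj_apply] using h1
                show IsPiNat (σ i) (orderOf (g * x * g⁻¹))
                rw [horder]
                exact hx.2
              have hTpi : IsPiNat (σ i) (Nat.card ↥T) := by
                intro p pp pd
                haveI : Fact p.Prime := ⟨pp⟩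
                obtain ⟨x, hx⟩ := exists_prime_orderOf_dvd_card' (G := ↥T) p pd
                have hmem : (x : G) ∈ Z ∧ IsPiNat (σ i) (orderOf (x : G)) := x.2
                have hox : orderOf (x : G) = p := by rw [Subgroup.orderOf_coe, hx]
                exact hmem.2 p pp (hox ▸ dvd_refl p)
              have hTbot : T = ⊥ := hkill T hTn hTpi
              have hZpi' : ∀ p : ℕ, Nat.Prime p → p ∣ Nat.card ↥Z → p ∉ σ i := by
                intro p pp pd hpσ
                haveI : Fact p.Prime := ⟨pp⟩
                obtain ⟨z, hz⟩ := exists_prime_orderOf_dvd_card' (G := ↥Z) p pd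
                have hoz : orderOf (z : G) = p := by rw [Subgroup.orderOf_coe, hz]
                have hzT : (z : G) ∈ T := by
                  refine ⟨z.2, ?_⟩
                  rw [hoz]
                  intro q qq qd
                  rwa [(Nat.prime_dvd_prime_iff_eq qq pp).mp qd]
                rw [hTbot] at hzT
                have hz1 : (z : G) = 1 := hzT
                exact pp.ne_one (by rw [← hoz, hz1, orderOf_one])
              haveI hZn' := hZn
              haveI hZLn : (Z.subgroupOf L).Normal := inferInstance
              have hZZ' : Nat.card ↥(Z.subgroupOf L) = Nat.card ↥Z :=
                card_subgroupOf inf_le_left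
              have hZ'ind : IsPiNat (σ i) ((Z.subgroupOf L).index) := by
                set ψL := (QuotientGroup.mk' C).comp L.subtype with hψL
                have hker : ψL.ker = Z.subgroupOf L := by
                  ext x
                  constructor
                  · intro hx
                    have h2 : QuotientGroup.mk' C (x : G) = 1 := hx
                    have h1 : (x : G) ∈ C := (QuotientGroup.eq_one_iff (x : G)).mp h2
                    exact Subgroup.mem_subgroupOf.mpr ⟨x.2, h1⟩
                  · intro hx
                    have h1 : (x : G) ∈ C := (Subgroup.mem_subgroupOf.mp hx).2
                    show QuotientGroup.mk' C (x : G) = 1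
                    exact (QuotientGroup.eq_one_iff (x : G)).mpr h1
                have h1 : (Z.subgroupOf L).index = Nat.card ↥ψL.range := by
                  rw [← hker, Subgroup.index_ker]
                have h2 : Nat.card ↥ψL.range ∣ C.index := by
                  have h3 : Nat.card ↥ψL.range ∣ Nat.card (G ⧸ C) :=
                    Subgroup.card_subgroup_dvd_card _
                  have h4 : Nat.card (G ⧸ C) = C.index := (Subgroup.index_eq_card _).symm
                  rwa [h4] at h3
                rw [h1]
                exact IsPiNat.of_dvd h2 hk
              have hcop : Nat.Coprime (Nat.card ↥(Z.subgroupOf L)) ((Z.subgroupOf L).index) := by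
                by_contra h
                obtain ⟨p, pp, pd⟩ := Nat.exists_prime_and_dvd h
                have h1 := pd.trans (Nat.gcd_dvd_left _ _)
                have h2 := pd.trans (Nat.gcd_dvd_right _ _)
                rw [hZZ'] at h1
                exact hZpi' p pp h1 (hZ'ind p pp h2)
              obtain ⟨K, hK⟩ := Subgroup.exists_right_complement'_of_coprime hcop
              have hcardK : Nat.card ↥K = (Z.subgroupOf L).index := by
                have h1 := hK.card_mul
                have h2 : Nat.card ↥(Z.subgroupOf L) * (Z.subgroupOf L).index = Nat.card ↥L :=
                  Subgroup.card_mul_index _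
                have hpos : 0 < Nat.card ↥(Z.subgroupOf L) := Nat.card_pos
                exact Nat.eq_of_mul_eq_mul_left hpos (h1.trans h2.symm)
              have hKpi : ∀ x : ↥L, x ∈ K → IsPiNat (σ i) (orderOf x) := by
                intro x hx
                have h1 : orderOf x ∣ Nat.card ↥K := by
                  have := orderOf_dvd_natCard (⟨x, hx⟩ : ↥K)
                  rwa [Subgroup.orderOf_mk] at this
                rw [hcardK] at h1
                exact IsPiNat.of_dvd h1 hZ'ind
              have hKmem : ∀ x : ↥L, IsPiNat (σ i) (orderOf x) → x ∈ K := by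
                intro x hxO
                obtain ⟨⟨z, k⟩, hzk, -⟩ := hK.existsUnique x
                have hzZ : (z : ↥L) ∈ Z.subgroupOf L := z.2
                have hzC : ((z : ↥L) : G) ∈ C := (Subgroup.mem_subgroupOf.mp hzZ).2
                have hcom : Commute (z : ↥L) (k : ↥L) := by
                  refine Subtype.ext ?_
                  show ((z : ↥L) : G) * ((k : ↥L) : G) = ((k : ↥L) : G) * ((z : ↥L) : G)
                  exact (Subgroup.mem_centralizer_iff.mp (k : ↥L).2) _ hzC
                set m := orderOf x with hm
                have hx1 : x ^ m = 1 := pow_orderOf_eq_one x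
                have hzkpow : (z : ↥L) ^ m * (k : ↥L) ^ m = 1 := by
                  rw [← hcom.mul_pow, hzk, hx1]
                have hzmem : (z : ↥L) ^ m ∈ Z.subgroupOf L := pow_mem hzZ m
                have hkmem : (((k : ↥L)) ^ m)⁻¹ ∈ K := inv_mem (pow_mem k.2 m)
                have heq : (z : ↥L) ^ m = (((k : ↥L)) ^ m)⁻¹ :=
                  eq_inv_of_mul_eq_one_left hzkpow
                have hbot : (z : ↥L) ^ m ∈ (Z.subgroupOf L) ⊓ K := ⟨hzmem, heq ▸ hkmem⟩
                have hzm1 : (z : ↥L) ^ m = 1 := by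
                  have hd := hK.disjoint
                  have := hd.le_bot hbot
                  simpa using this
                have hordz : orderOf (z : ↥L) ∣ m := orderOf_dvd_of_pow_eq_one hzm1
                have hordz2 : orderOf (z : ↥L) ∣ Nat.card ↥Z := by
                  have h1 := orderOf_dvd_natCard (⟨(z : ↥L), hzZ⟩ : ↥(Z.subgroupOf L))
                  rw [Subgroup.orderOf_mk] at h1
                  rwa [hZZ'] at h1
                have hord1 : orderOf (z : ↥L) = 1 := by
                  by_contra hne
                  obtain ⟨p, pp, pd⟩ := Nat.exists_prime_and_dvd hne
                  exact hZpi' p pp (pd.trans hordz2) (hxO p pp (pd.trans hordz))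
                have hz1 : (z : ↥L) = 1 := orderOf_eq_one_iff.mp hord1
                rw [← hzk, hz1, one_mul]
                exact k.2
              set NS := K.map L.subtype with hNSdef
              have hNSn : NS.Normal := by
                constructor
                intro x hx g
                obtain ⟨k0, hk0, rfl⟩ := Subgroup.mem_map.mp hx
                have hgL : g * (k0 : G) * g⁻¹ ∈ L := hLn.conj_mem _ k0.2 g
                refine Subgroup.mem_map.mpr ⟨⟨g * (k0 : G) * g⁻¹, hgL⟩, ?_, rfl⟩
                apply hKmem
                rw [Subgroup.orderOf_mk]
                have horder : orderOf (g * (k0 : G) * g⁻¹) = orderOf (k0 : G) := by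
                  have h1 := orderOf_injective (MulAut.conj g).toMonoidHom
                    (MulAut.conj g).injective (k0 : G)
                  simpa [MulAut.conj_apply] using h1
                rw [horder, Subgroup.orderOf_coe]
                exact hKpi k0 hk0
              have hNSpi : IsPiNat (σ i) (Nat.card ↥NS) := by
                refine IsPiNat.of_dvd (card_map_dvd _ _) ?_
                rw [hcardK]
                exact hZ'ind
              have hNSbot : NS = ⊥ := hkill NS hNSn hNSpi
              rw [hP]
              intro a ha
              have haL : a ∈ L := hQL (hAQ ha)
              have haO : IsPiNat (σ i) (orderOf (⟨a, haL⟩ : ↥L)) := by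
                rw [Subgroup.orderOf_mk]
                have h1 : orderOf a ∣ Nat.card ↥(f 0) := by
                  have := orderOf_dvd_natCard (⟨a, ha⟩ : ↥(f 0))
                  rwa [Subgroup.orderOf_mk] at this
                exact IsPiNat.of_dvd h1 hpi
              have hKa : (⟨a, haL⟩ : ↥L) ∈ K := hKmem _ haO
              have hNSa : a ∈ NS := Subgroup.mem_map.mpr ⟨_, hKa, rfl⟩
              rw [hNSbot] at hNSa
              exact hNSa
            · -- O_{σ i}(G) ≠ ⊥ : pass to the quotient
              have hPcard : 2 ≤ Nat.card ↥P := by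
                have h1 : Nat.card ↥P ≠ 1 := fun h => hP (Subgroup.card_eq_one.mp h)
                have h2 := Nat.card_pos (α := ↥P)
                omega
              have hQuotCard : Nat.card (G ⧸ P) ≤ n := by
                haveI : P.Normal := OPi_normal
                have h1 : Nat.card ↥P * P.index = Nat.card G := Subgroup.card_mul_index _
                have h2 : P.index = Nat.card (G ⧸ P) := Subgroup.index_eq_card _
                rw [h2] at h1
                have h3 := Nat.card_pos (α := G ⧸ P)
                have h4 : Nat.card (G ⧸ P) * 2 ≤ Nat.card (G ⧸ P) * Nat.card ↥P :=
                  Nat.mul_le_mul_left _ hPcard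
                have h5 : Nat.card (G ⧸ P) * Nat.card ↥P = Nat.card G := by
                  rw [mul_comm]; exact h1
                omega
              haveI : P.Normal := OPi_normal
              have hsnbar := sn_map (QuotientGroup.mk' P) (QuotientGroup.mk'_surjective P) hsnA
              have hpibar : IsPiNat (σ i) (Nat.card ↥((f 0).map (QuotientGroup.mk' P))) :=
                IsPiNat.of_dvd (card_map_dvd _ _) hpi
              have hbar := IH (G ⧸ P) i _ hQuotCard hsnbar hpibar
              set W := (OPi (σ i) (G ⧸ P)).comap (QuotientGroup.mk' P) with hWdef
              have hfW : f 0 ≤ W := by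
                intro x hx
                exact Subgroup.mem_comap.mpr (hbar (Subgroup.mem_map_of_mem _ hx))
              have hWn : W.Normal := OPi_normal.comap _
              have hPW : P ≤ W := by
                intro x hx
                have hker : QuotientGroup.mk' P x = 1 := (QuotientGroup.eq_one_iff x).mpr hx
                exact Subgroup.mem_comap.mpr (by rw [hker]; exact one_mem _)
              have hWpi : IsPiNat (σ i) (Nat.card ↥W) := by
                have h1 : Nat.card ↥W =
                    Nat.card (↥W ⧸ P.subgroupOf W) * Nat.card ↥(P.subgroupOf W) :=
                  Subgroup.card_eq_card_quotient_mul_card_subgroup _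
                have h2 : Nat.card ↥(P.subgroupOf W) = Nat.card ↥P := card_subgroupOf hPW
                set ψ := (QuotientGroup.mk' P).comp W.subtype with hψ
                have hker : ψ.ker = P.subgroupOf W := by
                  ext x
                  constructor
                  · intro hx
                    have h3 : QuotientGroup.mk' P (x : G) = 1 := hx
                    exact Subgroup.mem_subgroupOf.mpr ((QuotientGroup.eq_one_iff _).mp h3)
                  · intro hx
                    show QuotientGroup.mk' P (x : G) = 1
                    exact (QuotientGroup.eq_one_iff _).mpr (Subgroup.mem_subgroupOf.mp hx)
                have h3 : Nat.card (↥W ⧸ P.subgroupOf W) = Nat.card ↥ψ.range := by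
                  rw [← hker]
                  exact Nat.card_congr (QuotientGroup.quotientKerEquivRange ψ).toEquiv
                have h4 : ψ.range = W.map (QuotientGroup.mk' P) := by
                  rw [hψ, MonoidHom.range_comp, Subgroup.range_subtype]
                have h5 : W.map (QuotientGroup.mk' P) = OPi (σ i) (G ⧸ P) :=
                  Subgroup.map_comap_eq_self_of_surjective (QuotientGroup.mk'_surjective P) _
                rw [h1, h2, h3, h4, h5]
                exact IsPiNat.mul isPiNat_card_OPi isPiNat_card_OPi
              exact hfW.trans (le_OPi hWn hWpi)
          · -- the class of the primary quotient differs from σ i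
            have hdisj : Disjoint (σ i) (σ k) := hσ.2.2.1 i k hik
            have hbarbot : (f 0).map (QuotientGroup.mk' C) = ⊥ := by
              have hc1 : Nat.card ↥((f 0).map (QuotientGroup.mk' C)) = 1 := by
                by_contra hne
                obtain ⟨p, pp, pd⟩ := Nat.exists_prime_and_dvd hne
                have h1 : p ∈ σ i := hpi p pp (pd.trans (card_map_dvd _ _))
                have h2 : p ∈ σ k := by
                  refine hk p pp ?_
                  have h3 : Nat.card ↥((f 0).map (QuotientGroup.mk' C)) ∣ Nat.card (G ⧸ C) :=
                    Subgroup.card_subgroup_dvd_card _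
                  have h4 : Nat.card (G ⧸ C) = C.index := (Subgroup.index_eq_card _).symm
                  rw [h4] at h3
                  exact pd.trans h3
                exact Set.disjoint_left.mp hdisj h1 h2
              exact Subgroup.card_eq_one.mp hc1
            have hAC : f 0 ≤ C := by
              intro x hx
              have h1 : QuotientGroup.mk' C x ∈ (f 0).map (QuotientGroup.mk' C) :=
                Subgroup.mem_map_of_mem _ hx
              rw [hbarbot] at h1
              have h2 : QuotientGroup.mk' C x = 1 := h1
              exact (QuotientGroup.eq_one_iff x).mp h2
            have hCcard : Nat.card ↥C ≤ n := by
              have := card_lt_of_ne_top hCtop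
              omega
            have hsnC := sn_of_le hsnA hAC
            have hpiC : IsPiNat (σ i) (Nat.card ↥((f 0).subgroupOf C)) := by
              rw [card_subgroupOf hAC]; exact hpi
            have h3 := IH ↥C i _ hCcard hsnC hpiC
            have h4 : f 0 ≤ (OPi (σ i) ↥C).map C.subtype := by
              have h5 := Subgroup.map_mono (f := C.subtype) h3
              rwa [Subgroup.subgroupOf_map_subtype, inf_of_le_left hAC] at h5
            exact h4.trans (le_OPi (OPi_map_subtype_normal C)
              (IsPiNat.of_dvd (card_map_dvd _ _) isPiNat_card_OPi))

end SigmaHelp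
namespace SigmaHelp

open Subgroup

universe u v

variable {ι : Type*}

theorem range_iso_of_ker_eq {Y H₁ H₂ : Type*} [Group Y] [Group H₁] [Group H₂]
    (ψ₁ : Y →* H₁) (ψ₂ : Y →* H₂) (h : ψ₁.ker = ψ₂.ker) :
    Nonempty (↥ψ₁.range ≃* ↥ψ₂.range) :=
  ⟨((QuotientGroup.quotientKerEquivRange ψ₁).symm.trans
      (QuotientGroup.quotientMulEquivOfEq h)).trans
    (QuotientGroup.quotientKerEquivRange ψ₂)⟩

theorem sn_equiv {σ : ι → Set ℕ} {G₁ G₂ : Type*} [Group G₁] [Group G₂] (e : G₁ ≃* G₂)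
    (h : SigmaNilpotent σ G₁) : SigmaNilpotent σ G₂ := by
  obtain ⟨k, N, hn, hp, hd, hj⟩ := h
  refine ⟨k, fun t => (N t).map e.toMonoidHom, fun t => (hn t).map _ e.surjective,
    fun t => primary_of_dvd (card_map_dvd _ _) (hp t), fun t => ?_, ?_⟩
  · have hdt := hd t
    rw [disjoint_iff] at hdt ⊢
    have e1 : (⨆ s, ⨆ _ : s ≠ t, (N s).map e.toMonoidHom) =
        ((⨆ s, ⨆ _ : s ≠ t, N s)).map e.toMonoidHom := by
      simp [Subgroup.map_iSup]
    rw [e1, ← Subgroup.map_inf _ _ _ e.injective, hdt, Subgroup.map_bot]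
  · rw [← Subgroup.map_iSup, hj, ← MonoidHom.range_eq_map, MonoidHom.range_eq_top]
    exact e.surjective

theorem map_normal_in_range {G : Type*} [Group G] {Y : Type*} [Group Y] (ψ : Y →* G)
    (N : Subgroup Y) [hN : N.Normal] : ((N.map ψ).subgroupOf ψ.range).Normal := by
  rw [Subgroup.normal_subgroupOf_iff (Subgroup.map_le_range ψ N)]
  rintro h kk ⟨b, hb, rfl⟩ ⟨y, rfl⟩
  exact ⟨y * b * y⁻¹, hN.conj_mem b hb y, by simp⟩

theorem le_fitting_of_sn_image {σ : ι → Set ℕ} (hσ : IsPrimePartition σ)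
    {Gb : Type u} [Group Gb] [Finite Gb] {Aq : Subgroup Gb} (hA : SigmaSubnormal σ Aq)
    {Y : Type*} [Group Y] [Finite Y] (hY : SigmaNilpotent σ Y) (ψ : Y →* Gb)
    (hrange : ψ.range = Aq) : Aq ≤ sigmaFitting σ Gb := by
  obtain ⟨kk, N, hnorm, hprim, hdisj, hjoin⟩ := hY
  have hcomp : ∀ t, (N t).map ψ ≤ sigmaFitting σ Gb := by
    intro t
    obtain ⟨it, hit⟩ := hprim t
    haveI := hnorm t
    have h1 : (((N t).map ψ).subgroupOf Aq).Normal := hrange ▸ map_normal_in_range ψ (N t)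
    have hle : (N t).map ψ ≤ Aq := hrange ▸ Subgroup.map_le_range ψ (N t)
    have hsn : SigmaSubnormal σ ((N t).map ψ) := sn_prepend hle h1 hA
    have hpi : IsPiNat (σ it) (Nat.card ↥((N t).map ψ)) :=
      IsPiNat.of_dvd (card_map_dvd _ _) hit
    have h2 := O_lemma hσ (Nat.card Gb) Gb it _ le_rfl hsn hpi
    exact h2.trans (OPi_le_fitting it)
  have hAq : Aq = ⨆ t, (N t).map ψ := by
    rw [← hrange, MonoidHom.range_eq_map, ← hjoin, Subgroup.map_iSup]
  rw [hAq]
  exact iSup_le hcomp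

theorem term_normal {σ : ι → Set ℕ} {G : Type*} [Group G] :
    ∀ {n : ℕ} {F : Subgroup G}, IsUpperSigmaNilpotentSeriesTerm σ G n F → F.Normal := by
  intro n
  induction n with
  | zero =>
    intro F hF
    have h : F = ⊥ := hF
    rw [h]; infer_instance
  | succ n ih =>
    intro F hF
    obtain ⟨F', hF', heq⟩ := hF
    haveI := ih hF'
    rw [heq]
    exact (sigmaFitting_normal).comap _

theorem snl_zero {σ : ι → Set ℕ} {H : Type*} [Group H] (h : SigmaNilpotentLengthLE σ H 0) :
    ∀ x : H, x = 1 := by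
  obtain ⟨f, hmono, h0, htop, _, _⟩ := h
  intro x
  have h1 : f 0 = f (Fin.last 0) := rfl
  rw [h0, htop] at h1
  have h2 : x ∈ (⊤ : Subgroup H) := Subgroup.mem_top x
  rw [← h1] at h2
  exact Subgroup.mem_bot.mp h2

theorem main_aux (σ : ι → Set ℕ) (hσ : IsPrimePartition σ) (G : Type v) [Group G] [Finite G] :
    ∀ (n : ℕ) (H : Type u) [Group H] [Finite H] (φ : H →* G) (F : Subgroup G),
      SigmaSubnormal σ φ.range → SigmaNilpotentLengthLE σ H n →
      IsUpperSigmaNilpotentSeriesTerm σ G n F → φ.range ≤ F := by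
  intro n
  induction n with
  | zero =>
    intro H _ _ φ F hsn hl hF
    have hbot : F = ⊥ := hF
    rw [hbot]
    rintro x ⟨y, rfl⟩
    rw [snl_zero hl y]
    simp
  | succ n ih =>
    intro H _ _ φ F hsn hl hF
    obtain ⟨F', hF', heqF⟩ := hF
    haveI hF'n : F'.Normal := term_normal hF'
    have heq : F = (sigmaFitting σ (G ⧸ F')).comap (QuotientGroup.mk' F') := heqF
    obtain ⟨f, hmono, h0, htop, hnorm, hfac⟩ := hl
    set B0 := f (Fin.last n).castSucc with hB0
    haveI hB0n : B0.Normal := hnorm _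
    have hlB : SigmaNilpotentLengthLE σ ↥B0 n := by
      refine ⟨fun k => (f k.castSucc).subgroupOf B0, ?_, ?_, ?_, ?_, ?_⟩
      · intro a b hab
        exact Subgroup.comap_mono (hmono (Fin.castSucc_le_castSucc_iff.mpr hab))
      · show (f ((0 : Fin (n+1)).castSucc : Fin (n+2))).subgroupOf B0 = ⊥
        have e0 : ((0 : Fin (n+1)).castSucc : Fin (n+2)) = 0 := rfl
        rw [e0, h0, Subgroup.bot_subgroupOf]
      · show (f ((Fin.last n).castSucc : Fin (n+2))).subgroupOf B0 = ⊤
        rw [← hB0, Subgroup.subgroupOf_self]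
      · intro k
        haveI := hnorm k.castSucc
        infer_instance
      · intro j inst
        have hidx : ((j.castSucc : Fin (n+1)).succ : Fin (n+2)) =
            ((j.succ : Fin (n+1)).castSucc : Fin (n+2)) := Fin.succ_castSucc _
        have hYB : f ((j.succ : Fin (n+1)).castSucc) ≤ B0 := by
          rw [hB0]
          exact hmono (Fin.castSucc_le_castSucc_iff.mpr (Fin.le_last _))
        haveI hXn : (f ((j.castSucc : Fin (n+1)).castSucc)).Normal := hnorm _
        have hSN := hfac j.castSucc
        rw [hidx] at hSN
        set Yb := (f ((j.succ : Fin (n+1)).castSucc)).subgroupOf B0 with hYb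
        set Xb := (f ((j.castSucc : Fin (n+1)).castSucc)).subgroupOf B0 with hXb
        haveI hXbn : Xb.Normal := inst
        set ψ₁ := (QuotientGroup.mk' Xb).comp Yb.subtype with hψ1
        set ψ₂ := (QuotientGroup.mk' (f ((j.castSucc : Fin (n+1)).castSucc))).comp
          (B0.subtype.comp Yb.subtype) with hψ2
        have hker : ψ₁.ker = ψ₂.ker := by
          ext y
          simp only [hψ1, hψ2, MonoidHom.mem_ker, MonoidHom.comp_apply]
          constructor
          · intro hy
            have h1 : (y : ↥B0) ∈ Xb := (QuotientGroup.eq_one_iff _).mp hy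
            exact (QuotientGroup.eq_one_iff _).mpr (Subgroup.mem_subgroupOf.mp h1)
          · intro hy
            have h1 : ((y : ↥B0) : H) ∈ f ((j.castSucc : Fin (n+1)).castSucc) :=
              (QuotientGroup.eq_one_iff _).mp hy
            exact (QuotientGroup.eq_one_iff _).mpr (Subgroup.mem_subgroupOf.mpr h1)
        obtain ⟨e⟩ := range_iso_of_ker_eq ψ₁ ψ₂ hker
        have hr1 : ψ₁.range = Yb.map (QuotientGroup.mk' Xb) := by
          rw [hψ1, MonoidHom.range_comp, Subgroup.range_subtype]
        have hr2 : ψ₂.range = (f ((j.succ : Fin (n+1)).castSucc)).map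
            (QuotientGroup.mk' (f ((j.castSucc : Fin (n+1)).castSucc))) := by
          rw [hψ2, MonoidHom.range_comp, MonoidHom.range_comp, Subgroup.range_subtype,
            Subgroup.subgroupOf_map_subtype, inf_of_le_left hYB]
        show SigmaNilpotent σ ↥(Yb.map (QuotientGroup.mk' Xb))
        rw [← hr1]
        refine sn_equiv e.symm ?_
        rw [hr2]
        exact hSN
    have hrange_eq : (φ.comp B0.subtype).range = B0.map φ := by
      rw [MonoidHom.range_comp, Subgroup.range_subtype]
    have hmaple : B0.map φ ≤ φ.range := Subgroup.map_le_range φ B0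
    have hn1 : ((B0.map φ).subgroupOf φ.range).Normal := by
      rw [Subgroup.normal_subgroupOf_iff hmaple]
      rintro h kk ⟨b, hb, rfl⟩ ⟨y, rfl⟩
      exact ⟨y * b * y⁻¹, hB0n.conj_mem b hb y, by simp⟩
    have hsnB : SigmaSubnormal σ (φ.comp B0.subtype).range := by
      rw [hrange_eq]
      exact sn_prepend hmaple hn1 hsn
    have hBF' : (φ.comp B0.subtype).range ≤ F' := ih ↥B0 (φ.comp B0.subtype) F' hsnB hlB hF'
    rw [hrange_eq] at hBF'
    have hSNtop := hfac (Fin.last n)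
    have htop' : f ((Fin.last n).succ : Fin (n+2)) = ⊤ := htop
    rw [htop'] at hSNtop
    have hcond : B0 ≤ ((QuotientGroup.mk' F').comp φ).ker := by
      intro b hb
      have h1 : φ b ∈ F' := hBF' (Subgroup.mem_map_of_mem φ hb)
      exact (QuotientGroup.eq_one_iff _).mpr h1
    set χ := QuotientGroup.lift B0 ((QuotientGroup.mk' F').comp φ) hcond with hχ
    set Ysub := (⊤ : Subgroup H).map (QuotientGroup.mk' B0) with hYsub
    set ψY := χ.comp Ysub.subtype with hψY
    have hrY : ψY.range = (φ.range).map (QuotientGroup.mk' F') := by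
      rw [hψY, MonoidHom.range_comp, Subgroup.range_subtype, hYsub, Subgroup.map_map]
      have hcomp2 : χ.comp (QuotientGroup.mk' B0) = (QuotientGroup.mk' F').comp φ :=
        MonoidHom.ext fun x => rfl
      rw [hcomp2, ← MonoidHom.range_eq_map, MonoidHom.range_comp]
    have hAbar : SigmaSubnormal σ ((φ.range).map (QuotientGroup.mk' F')) :=
      sn_map _ (QuotientGroup.mk'_surjective F') hsn
    have hfit := le_fitting_of_sn_image hσ hAbar hSNtop ψY hrY
    rw [heq]
    intro x hx
    exact Subgroup.mem_comap.mpr (hfit (Subgroup.mem_map_of_mem _ hx))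

end SigmaHelp

/-- If `A` is a `σ`-subnormal subgroup of a finite group `G`, `A` is
`σ`-soluble with `l_σ(A) ≤ n`, then `A ≤ F_{nσ}(G)`. -/
theorem sigmaSubnormal_le_upperSigmaSeries {ι : Type*} (σ : ι → Set ℕ)
    (hσ : IsPrimePartition σ) (G : Type*) [Group G] [Finite G]
    (A : Subgroup G) (hA : SigmaSubnormal σ A)
    (hsol : SigmaSoluble σ ↥A) (n : ℕ) (hl : SigmaNilpotentLengthLE σ ↥A n)
    (F : Subgroup G) (hF : IsUpperSigmaNilpotentSeriesTerm σ G n F) :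
    A ≤ F := by
  have h1 : A.subtype.range = A := Subgroup.range_subtype A
  have h2 := SigmaHelp.main_aux σ hσ G n ↥A A.subtype F (by rwa [h1]) hl hF
  rwa [h1] at h2
end

section
/- Let A be a σ-subnormal subgroup of a finite group G. If A is a σ_i-group (i.e., every prime dividing |A| lies in σ_i), then A ≤ O_{σ_i}(G); consequently, if A is σ-nilpotent then A ≤ F_σ(G). -/
open Pointwise

section Helpers

open Subgroup

variable {G : Type*} [Group G]

/-- `H` is a `π`-subgroup. -/
def PiG (π : Set ℕ) {G : Type*} [Group G] (H : Subgroup G) : Prop :=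
  ∀ p : ℕ, Nat.Prime p → p ∣ Nat.card ↥H → p ∈ π

lemma piG_of_le {π : Set ℕ} {H K : Subgroup G} (hle : H ≤ K) (hK : PiG π K) : PiG π H :=
  fun p hp hdvd => hK p hp (hdvd.trans (Subgroup.card_dvd_of_le hle))

lemma card_map_of_injective {G' : Type*} [Group G'] (H : Subgroup G) (f : G →* G')
    (hf : Function.Injective f) : Nat.card ↥(H.map f) = Nat.card ↥H :=
  (Nat.card_congr (H.equivMapOfInjective f hf).toEquiv).symm

lemma piG_map_of_injective {π : Set ℕ} {G' : Type*} [Group G'] {H : Subgroup G} {f : G →* G'}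
    (hf : Function.Injective f) (hH : PiG π H) : PiG π (H.map f) := by
  intro p hp hdvd
  exact hH p hp (by rwa [card_map_of_injective H f hf] at hdvd)

lemma card_subgroupOf {H K : Subgroup G} (h : H ≤ K) :
    Nat.card ↥(H.subgroupOf K) = Nat.card ↥H :=
  Nat.card_congr (Subgroup.subgroupOfEquivOfLe h).toEquiv

/-- The join of two normal `π`-subgroups is a `π`-subgroup. -/
lemma piG_sup {π : Set ℕ} {N M : Subgroup G} [Finite G] (hN : N.Normal) (hM : M.Normal)
    (hNpi : PiG π N) (hMpi : PiG π M) : PiG π (N ⊔ M) := by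
  have hMle : M ≤ N ⊔ M := le_sup_right
  haveI : (M.subgroupOf (N ⊔ M)).Normal := by
    constructor
    intro n hn g
    have : (↑g * ↑n * (↑g)⁻¹ : G) ∈ M := hM.conj_mem _ (Subgroup.mem_subgroupOf.mp hn) _
    exact Subgroup.mem_subgroupOf.mpr this
  have hcard : Nat.card ↥(N ⊔ M) =
      Nat.card (↥(N ⊔ M) ⧸ (M.subgroupOf (N ⊔ M))) * Nat.card ↥(M.subgroupOf (N ⊔ M)) :=
    Subgroup.card_eq_card_quotient_mul_card_subgroup _
  have hq : Nat.card (↥(N ⊔ M) ⧸ (M.subgroupOf (N ⊔ M))) ∣ Nat.card ↥N := by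
    have e := QuotientGroup.quotientInfEquivProdNormalQuotient N M
    have : Nat.card (↥(N ⊔ M) ⧸ (M.subgroupOf (N ⊔ M))) = Nat.card (↥N ⧸ (M.subgroupOf N)) :=
      Nat.card_congr e.toEquiv.symm
    rw [this]
    exact Dvd.intro _ (Subgroup.card_eq_card_quotient_mul_card_subgroup (M.subgroupOf N)).symm
  intro p hp hdvd
  rw [hcard] at hdvd
  rcases hp.dvd_mul.mp hdvd with h | h
  · exact hNpi p hp (h.trans hq)
  · rw [card_subgroupOf hMle] at h
    exact hMpi p hp h

lemma normal_iff_map_conj {H : Subgroup G} :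
    H.Normal ↔ ∀ g : G, H.map (MulAut.conj g).toMonoidHom = H := by
  constructor
  · intro hH g
    ext x
    simp only [Subgroup.mem_map, MulEquiv.coe_toMonoidHom, MulAut.conj_apply]
    constructor
    · rintro ⟨y, hy, rfl⟩; exact hH.conj_mem y hy g
    · intro hx; exact ⟨g⁻¹ * x * g, by simpa using hH.conj_mem x hx g⁻¹, by group⟩
  · intro h
    constructor
    intro n hn g
    rw [← h g]
    exact ⟨n, hn, rfl⟩

lemma normal_sup {N M : Subgroup G} (hN : N.Normal) (hM : M.Normal) : (N ⊔ M).Normal := by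
  rw [normal_iff_map_conj] at hN hM ⊢
  intro g
  rw [Subgroup.map_sup, hN g, hM g]

/-- `OPi π G` is the largest normal `π`-subgroup of `G`. -/
lemma oPi_spec (π : Set ℕ) (G : Type*) [Group G] [Finite G] :
    (OPi π G).Normal ∧ PiG π (OPi π G) ∧
      ∀ N : Subgroup G, N.Normal → PiG π N → N ≤ OPi π G := by
  classical
  set S : Set (Subgroup G) := {N : Subgroup G | N.Normal ∧ ∀ p : ℕ, Nat.Prime p →
    p ∣ Nat.card ↥N → p ∈ π} with hS
  have hbot : (⊥ : Subgroup G) ∈ S := by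
    refine ⟨inferInstance, ?_⟩
    intro p hp hdvd
    rw [Subgroup.card_bot] at hdvd
    exact absurd (Nat.eq_one_of_dvd_one hdvd) hp.ne_one
  have hfin : S.Finite := Set.toFinite S
  obtain ⟨T, hTS, hTmax'⟩ := Set.Finite.exists_maximalFor id S hfin ⟨⊥, hbot⟩
  have hTmax : ∀ a' ∈ S, id T ≤ id a' → id T = id a' := fun a' ha h => le_antisymm h (hTmax' ha h)
  have hmax : ∀ N ∈ S, N ≤ T := by
    intro N hN
    have hsup : N ⊔ T ∈ S := ⟨normal_sup hN.1 hTS.1, piG_sup hN.1 hTS.1 hN.2 hTS.2⟩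
    have := hTmax (N ⊔ T) hsup le_sup_right
    simp only [id] at this
    exact this ▸ le_sup_left
  have hOT : OPi π G = T := by
    apply le_antisymm
    · exact iSup_le fun N => iSup_le fun hN => hmax N hN
    · exact le_iSup_of_le T (le_iSup_of_le hTS le_rfl)
  rw [hOT]
  exact ⟨hTS.1, hTS.2, fun N h1 h2 => hmax N ⟨h1, h2⟩⟩

end Helpers

section Helpers2

open Subgroup

variable {G : Type*} [Group G]

/-- `H` is a normal subgroup of `D` (both viewed inside an ambient group). -/
def NormalIn (D H : Subgroup G) : Prop :=
  H ≤ D ∧ ∀ d ∈ D, ∀ h ∈ H, d * h * d⁻¹ ∈ H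

lemma NormalIn.subgroupOf_normal {D H : Subgroup G} (h : NormalIn D H) :
    ((H.subgroupOf D)).Normal := by
  constructor
  intro n hn g
  exact Subgroup.mem_subgroupOf.mpr (h.2 g g.2 n (Subgroup.mem_subgroupOf.mp hn))

/-- a `π`-subgroup normal in `D` lies in the image of `OPi π ↥D`. -/
lemma normalIn_le_oPi_map {π : Set ℕ} [Finite G] {D H : Subgroup G}
    (h : NormalIn D H) (hpi : PiG π H) : H ≤ (OPi π ↥D).map D.subtype := by
  obtain ⟨-, -, hmax⟩ := oPi_spec π ↥D
  have h1 : H.subgroupOf D ≤ OPi π ↥D := by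
    refine hmax _ h.subgroupOf_normal ?_
    intro p hp hdvd
    rw [card_subgroupOf h.1] at hdvd
    exact hpi p hp hdvd
  have := Subgroup.map_mono (f := D.subtype) h1
  rwa [Subgroup.subgroupOf_map_subtype, inf_eq_left.mpr h.1] at this

lemma oPi_map_piG (π : Set ℕ) [Finite G] (D : Subgroup G) :
    PiG π ((OPi π ↥D).map D.subtype) ∧ (OPi π ↥D).map D.subtype ≤ D := by
  obtain ⟨-, hpi, -⟩ := oPi_spec π ↥D
  exact ⟨piG_map_of_injective D.subtype_injective hpi, Subgroup.map_subtype_le _⟩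

lemma normalIn_conj {D H : Subgroup G} (hD : D.Normal) (h : NormalIn D H) (g : G) :
    NormalIn D (H.map (MulAut.conj g).toMonoidHom) := by
  constructor
  · rintro x ⟨y, hy, rfl⟩
    exact hD.conj_mem y (h.1 hy) g
  · rintro d hd x ⟨y, hy, rfl⟩
    refine ⟨(g⁻¹ * d * g) * y * (g⁻¹ * d * g)⁻¹, h.2 _ ?_ y hy, ?_⟩
    · have := hD.conj_mem d hd g⁻¹
      simpa using this
    · simp only [MulEquiv.coe_toMonoidHom, MulAut.conj_apply]
      group

/-- Key lemma: a `π`-subgroup normal in a normal subgroup `D` lies in `OPi π G`. -/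
lemma normalIn_normal_le_oPi {π : Set ℕ} [Finite G] {D N : Subgroup G}
    (hD : D.Normal) (h : NormalIn D N) (hpi : PiG π N) : N ≤ OPi π G := by
  set W := (OPi π ↥D).map D.subtype with hW
  obtain ⟨hWpi, hWD⟩ := oPi_map_piG π D
  have hconj : ∀ g : G, N.map (MulAut.conj g).toMonoidHom ≤ W := by
    intro g
    exact normalIn_le_oPi_map (normalIn_conj hD h g)
      (piG_map_of_injective (MulAut.conj g).injective hpi)
  have hJ : Subgroup.normalClosure (N : Set G) ≤ W := by
    rw [Subgroup.normalClosure]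
    rw [Subgroup.closure_le]
    intro x hx
    rw [Group.mem_conjugatesOfSet_iff] at hx
    obtain ⟨a, ha, hconj'⟩ := hx
    obtain ⟨g, rfl⟩ := isConj_iff.mp hconj'
    exact hconj g ⟨a, ha, rfl⟩
  obtain ⟨-, -, hmax⟩ := oPi_spec π G
  refine le_trans Subgroup.le_normalClosure (hmax _ inferInstance (piG_of_le hJ hWpi))

end Helpers2

section Helpers3

open Subgroup

variable {G : Type*} [Group G] {G' : Type*} [Group G']

lemma map_equiv_roundtrip (e : G ≃* G') (K : Subgroup G) :
    (K.map e.toMonoidHom).map e.symm.toMonoidHom = K := by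
  rw [Subgroup.map_map]
  ext x
  simp [Subgroup.mem_map]

lemma map_equiv_roundtrip' (e : G ≃* G') (K : Subgroup G') :
    (K.map e.symm.toMonoidHom).map e.toMonoidHom = K := by
  rw [Subgroup.map_map]
  ext x
  simp [Subgroup.mem_map]

lemma normal_of_map_equiv {e : G ≃* G'} {K : Subgroup G}
    (h : (K.map e.toMonoidHom).Normal) : K.Normal := by
  have := h.map e.symm.toMonoidHom e.symm.surjective
  rwa [map_equiv_roundtrip] at this

lemma index_map_equiv (e : G ≃* G') (K : Subgroup G) :
    (K.map e.toMonoidHom).index = K.index := by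
  refine Nat.dvd_antisymm (Subgroup.index_map_dvd K e.surjective) ?_
  have := Subgroup.index_map_dvd (K.map e.toMonoidHom) (f := e.symm.toMonoidHom)
    e.symm.surjective
  rwa [map_equiv_roundtrip] at this

lemma normalCore_map_le (e : G ≃* G') (L : Subgroup G) :
    L.normalCore.map e.toMonoidHom ≤ (L.map e.toMonoidHom).normalCore := by
  haveI : (L.normalCore.map e.toMonoidHom).Normal :=
    L.normalCore_normal.map e.toMonoidHom e.surjective
  exact Subgroup.normal_le_normalCore.mpr (Subgroup.map_mono L.normalCore_le)

lemma normalCore_map_equiv (e : G ≃* G') (K : Subgroup G) :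
    (K.map e.toMonoidHom).normalCore = K.normalCore.map e.toMonoidHom := by
  refine le_antisymm ?_ (normalCore_map_le e K)
  have := normalCore_map_le e.symm (K.map e.toMonoidHom)
  rw [map_equiv_roundtrip] at this
  have h2 := Subgroup.map_mono (f := e.toMonoidHom) this
  rwa [map_equiv_roundtrip' e _] at h2

lemma map_topEquiv_subgroupOf_top (X : Subgroup G) :
    (X.subgroupOf ⊤).map (Subgroup.topEquiv (G := G)).toMonoidHom = X := by
  ext x
  simp only [Subgroup.mem_map, Subgroup.mem_subgroupOf]
  constructor
  · rintro ⟨y, hy, rfl⟩; exact hy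
  · intro hx; exact ⟨⟨x, trivial⟩, hx, rfl⟩

lemma map_subgroupOfEquivOfLe {X Y M : Subgroup G} (hY : Y ≤ M) :
    ((X.subgroupOf M).subgroupOf (Y.subgroupOf M)).map
      (Subgroup.subgroupOfEquivOfLe hY).toMonoidHom = X.subgroupOf Y := by
  ext y
  simp only [Subgroup.mem_map, Subgroup.mem_subgroupOf]
  constructor
  · rintro ⟨z, hz, rfl⟩
    exact hz
  · intro hy
    exact ⟨⟨⟨(y : G), hY y.2⟩, y.2⟩, hy, rfl⟩

/-- Transport the chain-step condition along an isomorphism of the top group. -/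
lemma step_transport {ι : Type*} (σ : ι → Set ℕ) {X Y : Subgroup G} {Y' : Subgroup G'}
    (e : ↥Y' ≃* ↥Y) (X' : Subgroup G')
    (hmap : (X'.subgroupOf Y').map e.toMonoidHom = X.subgroupOf Y)
    (hcond : (X.subgroupOf Y).Normal ∨
      IsSigmaPrimaryNat σ ((X.subgroupOf Y).normalCore.index)) :
    (X'.subgroupOf Y').Normal ∨
      IsSigmaPrimaryNat σ ((X'.subgroupOf Y').normalCore.index) := by
  rcases hcond with h | h
  · left
    exact normal_of_map_equiv (hmap ▸ h)
  · right
    rw [← hmap] at h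
    rwa [normalCore_map_equiv, _root_.index_map_equiv] at h

end Helpers3

section Helpers4

open Subgroup

variable {G : Type*} [Group G] {G' : Type*} [Group G']

lemma isSigmaPrimaryNat_of_dvd {ι : Type*} {σ : ι → Set ℕ} {m n : ℕ} (h : m ∣ n)
    (hn : IsSigmaPrimaryNat σ n) : IsSigmaPrimaryNat σ m := by
  obtain ⟨i, hi⟩ := hn
  exact ⟨i, fun p hp hdvd => hi p hp (hdvd.trans h)⟩

lemma subgroupOf_normal_iff_conj {X Y : Subgroup G} (hXY : X ≤ Y) :
    (X.subgroupOf Y).Normal ↔ ∀ y ∈ Y, ∀ x ∈ X, y * x * y⁻¹ ∈ X := by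
  constructor
  · intro h y hy x hx
    have := h.conj_mem ⟨x, hXY hx⟩ (Subgroup.mem_subgroupOf.mpr hx) ⟨y, hy⟩
    exact Subgroup.mem_subgroupOf.mp this
  · intro h
    constructor
    intro n hn g
    exact Subgroup.mem_subgroupOf.mpr (h g g.2 n (Subgroup.mem_subgroupOf.mp hn))

lemma subgroupOf_map_normal (φ : G →* G') {X Y : Subgroup G} (hXY : X ≤ Y)
    (h : (X.subgroupOf Y).Normal) : ((X.map φ).subgroupOf (Y.map φ)).Normal := by
  rw [subgroupOf_normal_iff_conj hXY] at h
  rw [subgroupOf_normal_iff_conj (Subgroup.map_mono hXY)]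
  rintro y' ⟨y, hy, rfl⟩ x' ⟨x, hx, rfl⟩
  exact ⟨y * x * y⁻¹, h y hy x hx, by simp⟩

lemma map_subgroupMap_subgroupOf_le (φ : G →* G') {X Y : Subgroup G} (K : Subgroup ↥Y)
    (hK : K ≤ X.subgroupOf Y) :
    K.map (φ.subgroupMap Y) ≤ (X.map φ).subgroupOf (Y.map φ) := by
  rintro x ⟨k, hk, rfl⟩
  refine Subgroup.mem_subgroupOf.mpr ?_
  exact ⟨(k : G), Subgroup.mem_subgroupOf.mp (hK hk), rfl⟩

lemma core_index_map_dvd (φ : G →* G') {X Y : Subgroup G} (hXY : X ≤ Y) :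
    ((X.map φ).subgroupOf (Y.map φ)).normalCore.index ∣
      ((X.subgroupOf Y).normalCore.index) := by
  set K := (X.subgroupOf Y).normalCore with hK
  have h1 : K.map (φ.subgroupMap Y) ≤ (X.map φ).subgroupOf (Y.map φ) :=
    map_subgroupMap_subgroupOf_le φ K (Subgroup.normalCore_le _)
  haveI : (K.map (φ.subgroupMap Y)).Normal :=
    (Subgroup.normalCore_normal _).map _ (MonoidHom.subgroupMap_surjective φ Y)
  have h2 : K.map (φ.subgroupMap Y) ≤ ((X.map φ).subgroupOf (Y.map φ)).normalCore :=
    Subgroup.normal_le_normalCore.mpr h1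
  calc ((X.map φ).subgroupOf (Y.map φ)).normalCore.index
      ∣ (K.map (φ.subgroupMap Y)).index := Subgroup.index_dvd_of_le h2
    _ ∣ K.index := Subgroup.index_map_dvd K (MonoidHom.subgroupMap_surjective φ Y)

end Helpers4

section Helpers5

open Subgroup

variable {G : Type*} [Group G]

lemma card_eq_one_of_no_primes {n : ℕ} (hn : n ≠ 0) (h : ∀ p : ℕ, Nat.Prime p → p ∣ n → False) :
    n = 1 := by
  by_contra h1
  obtain ⟨p, hp, hdvd⟩ := Nat.exists_prime_and_dvd h1
  exact h p hp hdvd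

lemma piG_comap_quotient {π : Set ℕ} [Finite G] (O : Subgroup G) [O.Normal]
    (hO : PiG π O) {W : Subgroup (G ⧸ O)} (hW : PiG π W) :
    PiG π (W.comap (QuotientGroup.mk' O)) := by
  intro p hp hdvd
  haveI : Fact p.Prime := ⟨hp⟩
  obtain ⟨x, hx⟩ := exists_prime_orderOf_dvd_card' (G := ↥(W.comap (QuotientGroup.mk' O))) p hdvd
  by_cases h1 : QuotientGroup.mk' O (x : G) = 1
  · have hxO : (x : G) ∈ O := by
      rwa [← MonoidHom.mem_ker, QuotientGroup.ker_mk'] at h1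
    have : orderOf (⟨(x : G), hxO⟩ : ↥O) = p := by
      rw [← hx]
      exact (Subgroup.orderOf_coe _).symm.trans (Subgroup.orderOf_coe x)
    refine hO p hp ?_
    rw [← this]
    exact orderOf_dvd_natCard _
  · have hyW : QuotientGroup.mk' O (x : G) ∈ W := x.2
    have hdvdp : orderOf (QuotientGroup.mk' O (x : G)) ∣ p := by
      rw [← hx, ← Subgroup.orderOf_coe x]
      exact orderOf_map_dvd _ _
    have hyp : orderOf (QuotientGroup.mk' O (x : G)) = p := by
      rcases (Nat.Prime.eq_one_or_self_of_dvd hp _ hdvdp) with h | h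
      · exact absurd (orderOf_eq_one_iff.mp h) h1
      · exact h
    refine hW p hp ?_
    have : orderOf (⟨QuotientGroup.mk' O (x : G), hyW⟩ : ↥W) = p := by
      rw [← hyp]
      exact (Subgroup.orderOf_coe (⟨(QuotientGroup.mk' O) (x : G), hyW⟩ : ↥W)).symm
    rw [← this]
    exact orderOf_dvd_natCard _

lemma card_quotient_lt [Finite G] {O : Subgroup G} [O.Normal] (hO : O ≠ ⊥) :
    Nat.card (G ⧸ O) < Nat.card G := by
  have h1 : 1 < Nat.card ↥O := (Subgroup.one_lt_card_iff_ne_bot O).mpr hO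
  have h2 := Subgroup.card_eq_card_quotient_mul_card_subgroup O
  have h3 : 0 < Nat.card (G ⧸ O) := Nat.card_pos
  nlinarith

lemma card_subgroup_lt [Finite G] {M : Subgroup G} (hM : M ≠ ⊤) :
    Nat.card ↥M < Nat.card G := by
  refine lt_of_le_of_ne (Nat.le_of_dvd Nat.card_pos (Subgroup.card_subgroup_dvd_card M)) ?_
  intro h
  exact hM (Subgroup.eq_top_of_card_eq M h)

end Helpers5

section Helpers6

open Subgroup

variable {G : Type*} [Group G]

lemma centralizer_normal {D : Subgroup G} (hD : D.Normal) :
    (Subgroup.centralizer (D : Set G)).Normal := by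
  constructor
  intro n hn g
  rw [Subgroup.mem_centralizer_iff]
  intro h hh
  have hh' : g⁻¹ * h * g ∈ D := by
    have := hD.conj_mem h hh g⁻¹
    simpa [mul_assoc] using this
  have hc := Subgroup.mem_centralizer_iff.mp hn (g⁻¹ * h * g) hh'
  calc h * (g * n * g⁻¹) = g * ((g⁻¹ * h * g) * n) * g⁻¹ := by group
    _ = g * (n * (g⁻¹ * h * g)) * g⁻¹ := by rw [hc]
    _ = g * n * g⁻¹ * h := by group

open scoped commutatorElement in
lemma key_case_bot {π : Set ℕ} [Finite G] {M D W : Subgroup G}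
    (hDnormal : D.Normal) (hDM : D ≤ M)
    (hWM : NormalIn M W) (hWpi : PiG π W)
    (hDpi' : ∀ p : ℕ, Nat.Prime p → p ∣ D.index → p ∈ π)
    (hObot : OPi π G = ⊥) : W = ⊥ := by
  classical
  -- Step 1 : W ⊓ D = ⊥
  have hWD : W ⊓ D = ⊥ := by
    have hNI : NormalIn D (W ⊓ D) := by
      refine ⟨inf_le_right, ?_⟩
      intro d hd k hk
      exact ⟨hWM.2 d (hDM hd) k hk.1, hDnormal.conj_mem k hk.2 d⟩
    have := normalIn_normal_le_oPi hDnormal hNI (piG_of_le inf_le_left hWpi)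
    rw [hObot] at this
    exact le_bot_iff.mp this
  -- Step 2 : elements of W and D commute
  have hcomm : ∀ v ∈ W, ∀ d ∈ D, Commute v d := by
    intro v hv d hd
    rw [← commutatorElement_eq_one_iff_commute]
    have h1 : ⁅v, d⁆ ∈ W := by
      have : ⁅v, d⁆ = v * (d * v⁻¹ * d⁻¹) := by group
      rw [this]
      exact mul_mem hv (hWM.2 d (hDM hd) v⁻¹ (inv_mem hv))
    have h2 : ⁅v, d⁆ ∈ D := by
      have : ⁅v, d⁆ = (v * d * v⁻¹) * d⁻¹ := by group
      rw [this]
      exact mul_mem (hDnormal.conj_mem d hd v) (inv_mem hd)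
    have : ⁅v, d⁆ ∈ W ⊓ D := ⟨h1, h2⟩
    rwa [hWD, Subgroup.mem_bot] at this
  set C := Subgroup.centralizer (D : Set G) with hCdef
  have hWC : W ≤ C := by
    intro v hv
    rw [Subgroup.mem_centralizer_iff]
    intro d hd
    exact (hcomm v hv d hd).symm
  have hCnormal : C.Normal := centralizer_normal hDnormal
  haveI := hCnormal
  set Z : Subgroup G := C ⊓ D with hZdef
  haveI hZnormal : Z.Normal := inferInstance
  -- Step 3 : Z is a π'-group
  have hZpi' : ∀ p : ℕ, Nat.Prime p → p ∈ π → ¬ p ∣ Nat.card ↥Z := by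
    have hcommZ : ∀ a ∈ Z, ∀ b ∈ Z, Commute a b := by
      intro a ha b hb
      have := Subgroup.mem_centralizer_iff.mp ha.1 b hb.2
      exact Commute.symm this
    set Zp : Subgroup G :=
      { carrier := {g | g ∈ Z ∧ ∀ p : ℕ, Nat.Prime p → p ∣ orderOf g → p ∈ π}
        one_mem' := ⟨one_mem Z, by
          intro p hp hdvd
          rw [orderOf_one] at hdvd
          exact absurd (Nat.eq_one_of_dvd_one hdvd) hp.ne_one⟩
        mul_mem' := by
          rintro a b ⟨haZ, ha⟩ ⟨hbZ, hb⟩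
          refine ⟨mul_mem haZ hbZ, ?_⟩
          intro p hp hdvd
          have hlcm := (hcommZ a haZ b hbZ).orderOf_mul_dvd_lcm
          have : p ∣ orderOf a * orderOf b :=
            (hdvd.trans hlcm).trans (Nat.lcm_dvd_mul _ _)
          rcases hp.dvd_mul.mp this with h | h
          · exact ha p hp h
          · exact hb p hp h
        inv_mem' := by
          rintro a ⟨haZ, ha⟩
          refine ⟨inv_mem haZ, ?_⟩
          intro p hp hdvd
          rw [orderOf_inv] at hdvd
          exact ha p hp hdvd } with hZp
    have hZpnormal : Zp.Normal := by
      constructor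
      rintro a ⟨haZ, ha⟩ g
      refine ⟨hZnormal.conj_mem a haZ g, ?_⟩
      intro p hp hdvd
      refine ha p hp ?_
      have : g * a * g⁻¹ = (MulAut.conj g).toMonoidHom a := by
        simp [MulAut.conj_apply]
      rw [this, orderOf_injective _ (MulAut.conj g).injective a] at hdvd
      exact hdvd
    have hZppi : PiG π Zp := by
      intro p hp hdvd
      haveI : Fact p.Prime := ⟨hp⟩
      obtain ⟨x, hx⟩ := exists_prime_orderOf_dvd_card' (G := ↥Zp) p hdvd
      have hmem : (x : G) ∈ Zp := x.2
      refine hmem.2 p hp ?_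
      rw [Subgroup.orderOf_coe x, hx]
    have hZpbot : Zp = ⊥ := by
      obtain ⟨-, -, hmax⟩ := oPi_spec π G
      have := hmax Zp hZpnormal hZppi
      rw [hObot] at this
      exact le_bot_iff.mp this
    intro p hp hpπ hdvd
    haveI : Fact p.Prime := ⟨hp⟩
    obtain ⟨z, hz⟩ := exists_prime_orderOf_dvd_card' (G := ↥Z) p hdvd
    have hzZp : (z : G) ∈ Zp := by
      refine ⟨z.2, ?_⟩
      intro q hq hqdvd
      rw [Subgroup.orderOf_coe z, hz] at hqdvd
      rcases (Nat.Prime.eq_one_or_self_of_dvd hp _ hqdvd) with h | h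
      · exact absurd h hq.ne_one
      · rwa [h]
    rw [hZpbot, Subgroup.mem_bot] at hzZp
    have : orderOf (z : G) = 1 := by rw [hzZp, orderOf_one]
    rw [Subgroup.orderOf_coe z, hz] at this
    exact hp.ne_one this
  -- Step 4 : set up inside C
  set Z' : Subgroup ↥C := Z.subgroupOf C with hZ'def
  haveI hZ'normal : Z'.Normal := Subgroup.normal_subgroupOf
  have hZ'central : Z' ≤ Subgroup.center ↥C := by
    intro z hz
    rw [Subgroup.mem_center_iff]
    intro c
    have hzD : (z : G) ∈ D := (Subgroup.mem_subgroupOf.mp hz).2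
    have := Subgroup.mem_centralizer_iff.mp c.2 (z : G) hzD
    exact Subtype.ext this.symm
  have hcardZ' : Nat.card ↥Z' = Nat.card ↥Z := card_subgroupOf inf_le_left
  -- index of Z' in C divides index of D in G
  have hidxdvd : Z'.index ∣ D.index := by
    have hker : ((QuotientGroup.mk' D).comp C.subtype).ker = Z' := by
      ext c
      simp only [MonoidHom.mem_ker, MonoidHom.comp_apply, QuotientGroup.mk'_apply]
      rw [QuotientGroup.eq_one_iff]
      simp only [hZ'def, Subgroup.mem_subgroupOf, hZdef, Subgroup.mem_inf]
      exact ⟨fun h => ⟨c.2, h⟩, fun h => h.2⟩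
    rw [← hker, Subgroup.index_ker]
    rw [Subgroup.index_eq_card]
    exact Subgroup.card_subgroup_dvd_card _
  have hcop : (Nat.card ↥Z').Coprime Z'.index := by
    rw [Nat.coprime_iff_gcd_eq_one]
    by_contra h
    obtain ⟨p, hp, hdvd⟩ := Nat.exists_prime_and_dvd h
    have h1 : p ∣ Nat.card ↥Z' := hdvd.trans (Nat.gcd_dvd_left _ _)
    have h2 : p ∣ Z'.index := hdvd.trans (Nat.gcd_dvd_right _ _)
    have hpπ : p ∈ π := hDpi' p hp (h2.trans hidxdvd)
    rw [hcardZ'] at h1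
    exact hZpi' p hp hpπ h1
  obtain ⟨H', hcomp⟩ := Subgroup.exists_right_complement'_of_coprime hcop
  -- H' is normal in C
  have hH'normal : H'.Normal := by
    constructor
    intro h hh c
    obtain ⟨⟨z, k⟩, hzk⟩ := hcomp.existsUnique c |>.exists
    have hzc : (z : ↥C) ∈ Subgroup.center ↥C := hZ'central (by exact z.2)
    have hzcomm : ∀ w : ↥C, (z : ↥C) * w = w * (z : ↥C) :=
      fun w => ((Subgroup.mem_center_iff.mp hzc) w).symm
    have hc : c = (z : ↥C) * (k : ↥C) := hzk.symm
    have : c * h * c⁻¹ = (z : ↥C) * ((k : ↥C) * h * (k : ↥C)⁻¹) * (z : ↥C)⁻¹ := by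
      rw [hc]; group
    rw [this]
    have hk : (k : ↥C) * h * (k : ↥C)⁻¹ ∈ H' := mul_mem (mul_mem k.2 hh) (inv_mem k.2)
    have : (z : ↥C) * ((k : ↥C) * h * (k : ↥C)⁻¹) * (z : ↥C)⁻¹
        = (k : ↥C) * h * (k : ↥C)⁻¹ := by
      rw [hzcomm ((k : ↥C) * h * (k : ↥C)⁻¹)]
      group
    rw [this]
    exact hk
  -- card H' = Z'.index  and  H'.index = card Z'
  have hcardH' : Nat.card ↥H' = Z'.index := by
    have h1 := hcomp.card_mul
    have h2 := Z'.index_mul_card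
    have hpos : 0 < Nat.card ↥Z' := Nat.card_pos
    have : Nat.card ↥Z' * Nat.card ↥H' = Nat.card ↥Z' * Z'.index := by
      rw [h1, ← h2]; ring
    exact Nat.eq_of_mul_eq_mul_left hpos this
  have hidxH' : H'.index = Nat.card ↥Z' := hcomp.index_eq_card
  set H : Subgroup G := H'.map C.subtype with hHdef
  have hHpi : PiG π H := by
    intro p hp hdvd
    rw [card_map_of_injective _ _ C.subtype_injective, hcardH'] at hdvd
    exact hDpi' p hp (hdvd.trans hidxdvd)
  have hHC : H ≤ C := Subgroup.map_subtype_le _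
  -- every π-subgroup of C is contained in H
  have hπle : ∀ K : Subgroup G, K ≤ C → PiG π K → K ≤ H := by
    intro K hKC hKpi
    set K' : Subgroup ↥C := K.subgroupOf C with hK'def
    set q := QuotientGroup.mk' H' with hq
    have himg : K'.map q = ⊥ := by
      rw [← Subgroup.card_eq_one]
      refine card_eq_one_of_no_primes Nat.card_pos.ne' ?_
      intro p hp hdvd
      have h1 : p ∣ Nat.card ↥K' :=
        hdvd.trans (Subgroup.card_dvd_of_surjective _ (MonoidHom.subgroupMap_surjective q K'))
      rw [card_subgroupOf hKC] at h1
      have hpπ : p ∈ π := hKpi p hp h1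
      have h2 : p ∣ Nat.card ↥Z := by
        have : Nat.card ↥(K'.map q) ∣ Nat.card (↥C ⧸ H') := Subgroup.card_subgroup_dvd_card _
        have h3 : p ∣ Nat.card (↥C ⧸ H') := hdvd.trans this
        rwa [← Subgroup.index_eq_card, hidxH', hcardZ'] at h3
      exact hZpi' p hp hpπ h2
    intro x hx
    have hx' : (⟨x, hKC hx⟩ : ↥C) ∈ K' := Subgroup.mem_subgroupOf.mpr hx
    have : q ⟨x, hKC hx⟩ ∈ K'.map q := ⟨_, hx', rfl⟩
    rw [himg, Subgroup.mem_bot] at this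
    have hxH' : (⟨x, hKC hx⟩ : ↥C) ∈ H' := by
      rwa [← QuotientGroup.ker_mk' H', MonoidHom.mem_ker]
    exact ⟨_, hxH', rfl⟩
  -- H is normal in G
  have hHnormal : H.Normal := by
    constructor
    intro x hx g
    have hle : H.map (MulAut.conj g).toMonoidHom ≤ H := by
      refine hπle _ ?_ (piG_map_of_injective (MulAut.conj g).injective hHpi)
      rintro y ⟨h, hh, rfl⟩
      exact hCnormal.conj_mem h (hHC hh) g
    exact hle ⟨x, hx, rfl⟩
  -- conclude : H = ⊥, so C = Z is a π'-group, so W = ⊥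
  have hHbot : H = ⊥ := by
    obtain ⟨-, -, hmax⟩ := oPi_spec π G
    have := hmax H hHnormal hHpi
    rw [hObot] at this
    exact le_bot_iff.mp this
  have hcardC : Nat.card ↥C = Nat.card ↥Z := by
    have h1 : Nat.card ↥H' = 1 := by
      rw [← card_map_of_injective H' C.subtype C.subtype_injective, ← hHdef, hHbot,
        Subgroup.card_bot]
    have h2 := hcomp.card_mul
    rw [h1, mul_one] at h2
    rw [← h2, hcardZ']
  rw [← Subgroup.card_eq_one]
  refine card_eq_one_of_no_primes Nat.card_pos.ne' ?_
  intro p hp hdvd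
  have h1 : p ∈ π := hWpi p hp hdvd
  have h2 : p ∣ Nat.card ↥Z := by
    have := Subgroup.card_dvd_of_le hWC
    rw [hcardC] at this
    exact hdvd.trans this
  exact hZpi' p hp h1 h2

end Helpers6

section MainInduction

open Subgroup

universe u

lemma subgroupOf_mono' {G : Type*} [Group G] {X Y M : Subgroup G} (h : X ≤ Y) :
    X.subgroupOf M ≤ Y.subgroupOf M :=
  fun _ hx => Subgroup.mem_subgroupOf.mpr (h (Subgroup.mem_subgroupOf.mp hx))

lemma main_induction {ι : Type*} (σ : ι → Set ℕ) (hσ : IsPrimePartition σ) :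
    ∀ n t : ℕ, ∀ (G : Type u) (_ : Group G) (_ : Finite G) (f : Fin (t + 1) → Subgroup G),
      Nat.card G ≤ n →
      f (Fin.last t) = ⊤ →
      (∀ j : Fin t, f j.castSucc ≤ f j.succ ∧
        (((f j.castSucc).subgroupOf (f j.succ)).Normal ∨
          IsSigmaPrimaryNat σ (((f j.castSucc).subgroupOf (f j.succ)).normalCore.index))) →
      ∀ i : ι, PiG (σ i) (f 0) → f 0 ≤ OPi (σ i) G := by
  intro n
  induction n with
  | zero =>
    intro t G _ _ f hn _ _ i _
    have : 0 < Nat.card G := Nat.card_pos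
    omega
  | succ n ihn =>
    intro t
    induction t with
    | zero =>
      intro G _ _ f _ htop _ i hpi
      have h0 : f 0 = ⊤ := htop
      obtain ⟨-, -, hmax⟩ := oPi_spec (σ i) G
      rw [h0]
      exact hmax ⊤ inferInstance (h0 ▸ hpi)
    | succ t iht =>
      intro G _ _ f hn htop hstep i hpi
      by_cases hO : OPi (σ i) G = ⊥
      case neg =>
        -- quotient by the nontrivial OPi
        haveI hOn : (OPi (σ i) G).Normal := (oPi_spec (σ i) G).1
        set φ := QuotientGroup.mk' (OPi (σ i) G) with hφ
        have hres : (f 0).map φ ≤ OPi (σ i) (G ⧸ OPi (σ i) G) := by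
          refine ihn (t + 1) (G ⧸ OPi (σ i) G) inferInstance inferInstance
            (fun j => (f j).map φ) ?_ ?_ ?_ i ?_
          · have := card_quotient_lt hO
            omega
          · show (f (Fin.last (t + 1))).map φ = ⊤
            rw [htop]
            exact Subgroup.map_top_of_surjective φ (QuotientGroup.mk'_surjective _)
          · intro j
            obtain ⟨hle, hcond⟩ := hstep j
            refine ⟨Subgroup.map_mono hle, ?_⟩
            rcases hcond with h | h
            · exact Or.inl (subgroupOf_map_normal φ hle h)
            · exact Or.inr (isSigmaPrimaryNat_of_dvd (core_index_map_dvd φ hle) h)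
          · intro p hp hdvd
            exact hpi p hp (hdvd.trans
              (Subgroup.card_dvd_of_surjective _ (MonoidHom.subgroupMap_surjective φ (f 0))))
        have h1 : f 0 ≤ Subgroup.comap φ (OPi (σ i) (G ⧸ OPi (σ i) G)) :=
          le_trans (Subgroup.le_comap_map φ (f 0)) (Subgroup.comap_mono hres)
        obtain ⟨hq1, hq2, -⟩ := oPi_spec (σ i) (G ⧸ OPi (σ i) G)
        obtain ⟨-, hOpi, hmax⟩ := oPi_spec (σ i) G
        exact le_trans h1 (hmax _ (hq1.comap φ) (piG_comap_quotient _ hOpi hq2))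
      case pos =>
        set M := f (Fin.last t).castSucc with hMdef
        have hlast := hstep (Fin.last t)
        rw [Fin.succ_last, htop] at hlast
        by_cases hMtop : M = ⊤
        · -- drop the last (trivial) step of the chain
          refine iht G ‹_› ‹_› (fun j => f j.castSucc) hn hMtop ?_ i ?_
          · intro j
            have h := hstep j.castSucc
            rwa [Fin.succ_castSucc] at h
          · simpa using hpi
        · have hMlt : Nat.card ↥M < Nat.card G := card_subgroup_lt hMtop
          have hmono : Monotone f := Fin.monotone_iff_le_succ.mpr (fun j => (hstep j).1)
          have hleM : ∀ j : Fin (t + 1), f j.castSucc ≤ M :=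
            fun j => hmono (Fin.castSucc_le_castSucc_iff.mpr (Fin.le_last j))
          have hf0M : f 0 ≤ M := by
            have := hleM 0
            rwa [Fin.castSucc_zero] at this
          -- the restricted chain inside M
          have htop' : (f (Fin.castSucc (Fin.last t))).subgroupOf M = ⊤ := by
            rw [← hMdef]
            exact Subgroup.subgroupOf_self M
          have hstep' : ∀ j : Fin t,
              (f (Fin.castSucc j.castSucc)).subgroupOf M ≤ (f (Fin.castSucc j.succ)).subgroupOf M ∧
              ((((f (Fin.castSucc j.castSucc)).subgroupOf M).subgroupOf
                  ((f (Fin.castSucc j.succ)).subgroupOf M)).Normal ∨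
                IsSigmaPrimaryNat σ ((((f (Fin.castSucc j.castSucc)).subgroupOf M).subgroupOf
                  ((f (Fin.castSucc j.succ)).subgroupOf M)).normalCore.index)) := by
            intro j
            have h := hstep j.castSucc
            rw [Fin.succ_castSucc] at h
            obtain ⟨hle, hcond⟩ := h
            have hYM : f j.succ.castSucc ≤ M := hleM j.succ
            refine ⟨subgroupOf_mono' hle, ?_⟩
            exact step_transport σ (Subgroup.subgroupOfEquivOfLe hYM) _
              (map_subgroupOfEquivOfLe hYM) hcond
          have hpi' : PiG (σ i) ((f (Fin.castSucc (0 : Fin (t + 1)))).subgroupOf M) := by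
            rw [Fin.castSucc_zero]
            intro p hp hdvd
            rw [card_subgroupOf hf0M] at hdvd
            exact hpi p hp hdvd
          have happ0 := ihn t ↥M inferInstance inferInstance
            (fun j => (f j.castSucc).subgroupOf M) (by omega) htop' hstep' i hpi'
          have happ : (f 0).subgroupOf M ≤ OPi (σ i) ↥M := by
            have h2 : (f (Fin.castSucc (0 : Fin (t + 1)))).subgroupOf M ≤ OPi (σ i) ↥M := happ0
            rwa [Fin.castSucc_zero] at h2
          set W := (OPi (σ i) ↥M).map M.subtype with hWdef
          obtain ⟨hWpi, hWM⟩ := oPi_map_piG (σ i) M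
          have hf0W : f 0 ≤ W := by
            have h2 := Subgroup.map_mono (f := M.subtype) happ
            rwa [Subgroup.subgroupOf_map_subtype, inf_eq_left.mpr hf0M] at h2
          have hWNI : NormalIn M W := by
            refine ⟨hWM, ?_⟩
            rintro m hm w ⟨w', hw', rfl⟩
            exact ⟨⟨m, hm⟩ * w' * ⟨m, hm⟩⁻¹,
              (oPi_spec (σ i) ↥M).1.conj_mem w' hw' ⟨m, hm⟩, rfl⟩
          rcases hlast.2 with hnorm | hprim
          · -- M is normal in G
            have hMnormal : M.Normal := by
              have hsurj : Function.Surjective ⇑(Subgroup.topEquiv (G := G)).toMonoidHom :=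
                Subgroup.topEquiv.surjective
              have := hnorm.map Subgroup.topEquiv.toMonoidHom hsurj
              rw [map_topEquiv_subgroupOf_top] at this
              exact this
            exact le_trans hf0W (normalIn_normal_le_oPi hMnormal hWNI hWpi)
          · -- σ-primary quotient case
            obtain ⟨jc, hjc⟩ := hprim
            set D := M.normalCore with hDdef
            haveI hDnormal : D.Normal := Subgroup.normalCore_normal M
            have hcoreidx : D.index = ((M.subgroupOf ⊤).normalCore).index := by
              conv_lhs => rw [hDdef, ← map_topEquiv_subgroupOf_top M]
              rw [normalCore_map_equiv, _root_.index_map_equiv]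
            have hDidx : ∀ p : ℕ, Nat.Prime p → p ∣ D.index → p ∈ σ jc := by
              intro p hp hdvd
              rw [hcoreidx] at hdvd
              exact hjc p hp hdvd
            have hDM : D ≤ M := M.normalCore_le
            by_cases hWD : W ≤ D
            · refine le_trans hf0W (normalIn_normal_le_oPi hDnormal ⟨hWD, ?_⟩ hWpi)
              intro d hd w hw
              exact hWNI.2 d (hDM hd) w hw
            · -- the class jc coincides with i on the primes of G/D
              rw [SetLike.le_def] at hWD
              push_neg at hWD
              obtain ⟨v, hvW, hvD⟩ := hWD
              have hi_idx : ∀ p : ℕ, Nat.Prime p → p ∣ D.index → p ∈ σ i := by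
                have hWqne : Nat.card ↥(W.map (QuotientGroup.mk' D)) ≠ 1 := by
                  intro h
                  rw [Subgroup.card_eq_one] at h
                  have hmem : QuotientGroup.mk' D v ∈ W.map (QuotientGroup.mk' D) :=
                    ⟨v, hvW, rfl⟩
                  rw [h, Subgroup.mem_bot] at hmem
                  exact hvD ((QuotientGroup.eq_one_iff v).mp (by simpa using hmem))
                obtain ⟨p0, hp0, hp0dvd⟩ := Nat.exists_prime_and_dvd hWqne
                have hp0i : p0 ∈ σ i := hWpi _ hp0 (hp0dvd.trans
                  (Subgroup.card_dvd_of_surjective _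
                    (MonoidHom.subgroupMap_surjective (QuotientGroup.mk' D) W)))
                have hp0jc : p0 ∈ σ jc := by
                  refine hDidx _ hp0 ?_
                  have h2 : Nat.card ↥(W.map (QuotientGroup.mk' D)) ∣ Nat.card (G ⧸ D) :=
                    Subgroup.card_subgroup_dvd_card _
                  rw [Subgroup.index_eq_card]
                  exact hp0dvd.trans h2
                by_cases hij : i = jc
                · rw [hij]; exact hDidx
                · exact absurd hp0jc (Set.disjoint_left.mp (hσ.2.2.1 i jc hij) hp0i)
              have hWbot : W = ⊥ := key_case_bot hDnormal hDM hWNI hWpi hi_idx hO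
              rw [hWbot] at hf0W
              exact le_trans hf0W bot_le

end MainInduction

/-- If `A` is a `σ`-subnormal subgroup of a finite group `G` and `A` is a
`σ i`-group, then `A ≤ O_{σ i}(G)`; consequently, if `A` is `σ`-nilpotent then
`A ≤ F_σ(G)`. -/
theorem sigmaSubnormal_le_oPi_and_fitting {ι : Type*} (σ : ι → Set ℕ)
    (hσ : IsPrimePartition σ) (G : Type*) [Group G] [Finite G]
    (A : Subgroup G) (hA : SigmaSubnormal σ A) :
    (∀ i : ι, (∀ p : ℕ, Nat.Prime p → p ∣ Nat.card ↥A → p ∈ σ i) → A ≤ OPi (σ i) G) ∧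
    (SigmaNilpotent σ ↥A → A ≤ sigmaFitting σ G) := by
  obtain ⟨t, f, hf0, hftop, hstep⟩ := hA
  have part1 : ∀ i : ι, (∀ p : ℕ, Nat.Prime p → p ∣ Nat.card ↥A → p ∈ σ i) →
      A ≤ OPi (σ i) G := by
    intro i hpi
    have := main_induction σ hσ (Nat.card G) t G inferInstance inferInstance f le_rfl
      hftop hstep i (by rw [hf0]; exact hpi)
    rwa [hf0] at this
  refine ⟨part1, ?_⟩
  intro hnilp
  obtain ⟨k, N, hNnorm, hNprim, hdisj, hNsup⟩ := hnilp
  have hA_eq : A = ⨆ s : Fin k, (N s).map A.subtype := by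
    calc A = (⊤ : Subgroup ↥A).map A.subtype := by
          rw [← MonoidHom.range_eq_map, Subgroup.range_subtype]
      _ = ⨆ s : Fin k, (N s).map A.subtype := by rw [← hNsup, Subgroup.map_iSup]
  conv_lhs => rw [hA_eq]
  refine iSup_le ?_
  intro s
  obtain ⟨is, his⟩ := hNprim s
  set B : Subgroup G := (N s).map A.subtype with hBdef
  have hBpi : PiG (σ is) B := by
    intro p hp hdvd
    rw [hBdef, card_map_of_injective _ _ A.subtype_injective] at hdvd
    exact his p hp hdvd
  have hBA : B ≤ A := Subgroup.map_subtype_le _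
  have hBnormal : (B.subgroupOf A).Normal := by
    have heq : B.subgroupOf A = N s :=
      Subgroup.comap_map_eq_self_of_injective A.subtype_injective (N s)
    rw [heq]
    exact hNnorm s
  -- extend the σ-subnormal chain of A by B at the bottom
  set g : Fin (t + 2) → Subgroup G := Fin.cases B f with hg
  have hg0 : g 0 = B := by simp [hg]
  have hgtop : g (Fin.last (t + 1)) = ⊤ := by
    rw [hg, ← Fin.succ_last]
    simp only [Fin.cases_succ]
    exact hftop
  have hgstep : ∀ j : Fin (t + 1), g j.castSucc ≤ g j.succ ∧
      (((g j.castSucc).subgroupOf (g j.succ)).Normal ∨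
        IsSigmaPrimaryNat σ (((g j.castSucc).subgroupOf (g j.succ)).normalCore.index)) := by
    intro j
    induction j using Fin.cases with
    | zero =>
      have h1 : g (Fin.castSucc (0 : Fin (t + 1))) = B := by
        rw [Fin.castSucc_zero]; exact hg0
      have h2 : g ((0 : Fin (t + 1)).succ) = A := by
        rw [hg]
        simp only [Fin.cases_succ]
        exact hf0
      rw [h1, h2]
      exact ⟨hBA, Or.inl hBnormal⟩
    | succ j' =>
      have h1 : g (Fin.castSucc (Fin.succ j')) = f j'.castSucc := by
        rw [← Fin.succ_castSucc, hg]
        simp only [Fin.cases_succ]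
      have h2 : g ((Fin.succ j').succ) = f j'.succ := by
        rw [hg]
        simp only [Fin.cases_succ]
      rw [h1, h2]
      exact hstep j'
  have hmain := main_induction σ hσ (Nat.card G) (t + 1) G inferInstance inferInstance g
    le_rfl hgtop hgstep is (by rw [hg0]; exact hBpi)
  rw [hg0] at hmain
  -- OPi (σ is) G is a normal σ-nilpotent subgroup, hence lies in the σ-Fitting subgroup
  obtain ⟨hOn, hOpi, -⟩ := oPi_spec (σ is) G
  have hnil : SigmaNilpotent σ ↥(OPi (σ is) G) := by
    refine ⟨1, fun _ => ⊤, fun _ => inferInstance, ?_, ?_, ?_⟩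
    · intro _
      refine ⟨is, ?_⟩
      intro p hp hdvd
      have hcard : Nat.card ↥(⊤ : Subgroup ↥(OPi (σ is) G)) = Nat.card ↥(OPi (σ is) G) :=
        Nat.card_congr Subgroup.topEquiv.toEquiv
      rw [hcard] at hdvd
      exact hOpi p hp hdvd
    · intro s0
      have hsup : (⨆ s' : Fin 1, ⨆ _ : s' ≠ s0, (⊤ : Subgroup ↥(OPi (σ is) G))) = ⊥ := by
        refine le_antisymm ?_ bot_le
        exact iSup_le fun s' => iSup_le fun hne => absurd (Subsingleton.elim s' s0) hne
      rw [hsup]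
      exact disjoint_bot_right
    · exact iSup_const
  have hmem : OPi (σ is) G ∈ {N : Subgroup G | N.Normal ∧ SigmaNilpotent σ ↥N} := ⟨hOn, hnil⟩
  have hOfit : OPi (σ is) G ≤ sigmaFitting σ G :=
    le_iSup_of_le (OPi (σ is) G) (le_iSup_of_le hmem le_rfl)
  exact le_trans hmain hOfit
end

section
/- Let A be a σ-subnormal subgroup of a finite group G. If A is σ-perfect, i.e., A coincides with its σ-nilpotent residual A^{𝔑_σ}, then A is subnormal in G. -/
open Pointwise

namespace SigmaAux

variable {P Q : Type*} [Group P] [Group Q]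

theorem mapE_symm_map (e : P ≃* Q) (Y : Subgroup P) :
    (Y.map e.toMonoidHom).map e.symm.toMonoidHom = Y := by
  ext x
  simp [Subgroup.mem_map]

theorem mapE_map_symm (e : P ≃* Q) (Y : Subgroup Q) :
    (Y.map e.symm.toMonoidHom).map e.toMonoidHom = Y := by
  simpa using mapE_symm_map e.symm Y

theorem mapE_normal (e : P ≃* Q) (Y : Subgroup P) (h : Y.Normal) :
    (Y.map e.toMonoidHom).Normal :=
  h.map _ e.surjective

theorem mapE_normal_iff (e : P ≃* Q) (Y : Subgroup P) :
    (Y.map e.toMonoidHom).Normal ↔ Y.Normal := by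
  refine ⟨fun h => ?_, mapE_normal e Y⟩
  have := mapE_normal e.symm _ h
  rwa [mapE_symm_map] at this

theorem mapE_index (e : P ≃* Q) (Y : Subgroup P) :
    (Y.map e.toMonoidHom).index = Y.index := by
  refine Subgroup.index_map_eq Y e.surjective ?_
  rw [(MonoidHom.ker_eq_bot_iff _).mpr e.injective]
  exact bot_le

theorem mapE_le_normalCore (e : P ≃* Q) (Y : Subgroup P) :
    Y.normalCore.map e.toMonoidHom ≤ (Y.map e.toMonoidHom).normalCore := by
  have h1 : (Y.normalCore.map e.toMonoidHom).Normal := mapE_normal e _ inferInstance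
  exact Subgroup.normal_le_normalCore.mpr (Subgroup.map_mono Y.normalCore_le)

theorem mapE_normalCore (e : P ≃* Q) (Y : Subgroup P) :
    (Y.map e.toMonoidHom).normalCore = Y.normalCore.map e.toMonoidHom := by
  refine le_antisymm ?_ (mapE_le_normalCore e Y)
  have h := mapE_le_normalCore e.symm (Y.map e.toMonoidHom)
  rw [mapE_symm_map] at h
  have h2 := Subgroup.map_mono (f := e.toMonoidHom) h
  rwa [mapE_map_symm] at h2

variable {ι : Type*} (σ : ι → Set ℕ) {P Q : Type*} [Group P] [Group Q]

/-- The step condition of σ-subnormality, for a subgroup of an ambient group. -/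
def StepCond (Z : Subgroup P) : Prop :=
  Z.Normal ∨ IsSigmaPrimaryNat σ Z.normalCore.index

theorem isSigmaPrimaryNat_of_dvd {n m : ℕ} (h : IsSigmaPrimaryNat σ n) (hd : m ∣ n) :
    IsSigmaPrimaryNat σ m := by
  obtain ⟨i, hi⟩ := h
  exact ⟨i, fun p hp hpm => hi p hp (hpm.trans hd)⟩

theorem stepCond_subgroupOf {X : Subgroup P} (W : Subgroup P) (h : StepCond σ X) :
    StepCond σ (X.subgroupOf W) := by
  rcases h with h | h
  · exact Or.inl inferInstance
  · refine Or.inr (isSigmaPrimaryNat_of_dvd σ h ?_)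
    have h1 : X.normalCore.subgroupOf W ≤ (X.subgroupOf W).normalCore :=
      Subgroup.normal_le_normalCore.mpr (Subgroup.comap_mono X.normalCore_le)
    calc (X.subgroupOf W).normalCore.index
        ∣ (X.normalCore.subgroupOf W).index := Subgroup.index_dvd_of_le h1
      _ = X.normalCore.relIndex W := rfl
      _ ∣ X.normalCore.index := Subgroup.relIndex_dvd_index_of_normal (H := X.normalCore) W

theorem stepCond_mapE_iff (e : P ≃* Q) (Y : Subgroup P) :
    StepCond σ (Y.map e.toMonoidHom) ↔ StepCond σ Y := by
  unfold StepCond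
  rw [mapE_normal_iff, mapE_normalCore, mapE_index]

theorem sigmaNilpotent_of_isSigmaPrimary (h : IsSigmaPrimary σ P) : SigmaNilpotent σ P := by
  refine ⟨1, fun _ => ⊤, fun _ => inferInstance, fun _ => ?_, fun t => ?_, by simp⟩
  · obtain ⟨i, hi⟩ := h
    exact ⟨i, fun p hp hpd => hi p hp (by rwa [Nat.card_congr Subgroup.topEquiv.toEquiv] at hpd)⟩
  · have : ∀ s : Fin 1, s = t := fun s => Subsingleton.elim s t
    have h2 : (⨆ s : Fin 1, ⨆ _ : s ≠ t, (⊤ : Subgroup P)) = ⊥ := by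
      simp [this]
    rw [h2]
    exact disjoint_bot_right

theorem sigmaNilpotent_of_mulEquiv (e : P ≃* Q) (h : SigmaNilpotent σ P) :
    SigmaNilpotent σ Q := by
  obtain ⟨k, N, hnorm, hprim, hdisj, hsup⟩ := h
  refine ⟨k, fun t => (N t).map e.toMonoidHom, fun t => mapE_normal e _ (hnorm t),
    fun t => ?_, fun t => ?_, ?_⟩
  · obtain ⟨i, hi⟩ := hprim t
    refine ⟨i, fun p hp hpd => hi p hp ?_⟩
    rwa [Nat.card_congr ((Subgroup.equivMapOfInjective (N t) e.toMonoidHom e.injective).toEquiv)]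
  · have h2 : (⨆ s, ⨆ _ : s ≠ t, (N s).map e.toMonoidHom) =
        (⨆ s, ⨆ _ : s ≠ t, N s).map e.toMonoidHom := by
      rw [Subgroup.map_iSup]
      congr 1
      ext s
      rcases Classical.em (s = t) with h | h
      · simp [h]
      · simp [h]
    rw [h2, disjoint_iff, ← Subgroup.map_inf _ _ _ e.injective,
      disjoint_iff.mp (hdisj t), Subgroup.map_bot]
  · rw [← Subgroup.map_iSup, hsup, Subgroup.map_top_of_surjective _ e.surjective]

theorem perfect_of_mulEquiv (e : P ≃* Q)
    (h : ∀ (N : Subgroup Q) [N.Normal], SigmaNilpotent σ (Q ⧸ N) → N = ⊤) :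
    ∀ (N : Subgroup P) [N.Normal], SigmaNilpotent σ (P ⧸ N) → N = ⊤ := by
  intro N hN hsn
  haveI : (N.map e.toMonoidHom).Normal := mapE_normal e N hN
  have hq : SigmaNilpotent σ (Q ⧸ N.map e.toMonoidHom) :=
    sigmaNilpotent_of_mulEquiv σ (QuotientGroup.congr N (N.map e.toMonoidHom) e rfl) hsn
  have := h (N.map e.toMonoidHom) hq
  apply Subgroup.map_injective (f := e.toMonoidHom) e.injective
  rw [this, Subgroup.map_top_of_surjective _ e.surjective]

section Restrict
variable {G : Type*} [Group G]

/-- Transfer equivalence between two views of `L ⊓ D`. -/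
noncomputable def resE (L D : Subgroup G) :
    ↥((L ⊓ D).subgroupOf D) ≃* ↥((L ⊓ D).subgroupOf L) :=
  (Subgroup.subgroupOfEquivOfLe (inf_le_right : L ⊓ D ≤ D)).trans
    (Subgroup.subgroupOfEquivOfLe (inf_le_left : L ⊓ D ≤ L)).symm

@[simp] theorem resE_coe (L D : Subgroup G) (x : ↥((L ⊓ D).subgroupOf D)) :
    (((resE L D x : ↥((L ⊓ D).subgroupOf L)) : ↥L) : G) = ((x : ↥D) : G) := rfl

theorem resE_map (K L D : Subgroup G) :
    Subgroup.map (resE L D).toMonoidHom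
        (((K ⊓ D).subgroupOf D).subgroupOf ((L ⊓ D).subgroupOf D)) =
      (K.subgroupOf L).subgroupOf ((L ⊓ D).subgroupOf L) := by
  ext x
  simp only [Subgroup.mem_map, Subgroup.mem_subgroupOf]
  constructor
  · rintro ⟨y, hy, rfl⟩
    simp only [MulEquiv.coe_toMonoidHom, resE_coe] at *
    exact hy.1
  · intro hx
    refine ⟨(resE L D).symm x, ?_, by simp⟩
    have hc : ((((resE L D).symm x : ↥D)) : G) = ((x : ↥L) : G) := rfl
    simp only [Subgroup.mem_subgroupOf, hc]
    exact ⟨hx, (Subgroup.mem_inf.mp x.2).2⟩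

theorem restrict_step (K L D : Subgroup G) (h : StepCond σ (K.subgroupOf L)) :
    StepCond σ (((K ⊓ D).subgroupOf D).subgroupOf ((L ⊓ D).subgroupOf D)) := by
  have h1 : StepCond σ ((K.subgroupOf L).subgroupOf ((L ⊓ D).subgroupOf L)) :=
    stepCond_subgroupOf σ _ h
  rw [← stepCond_mapE_iff σ (resE L D), resE_map]
  exact h1

end Restrict

def IsSubnormalIn {G : Type*} [Group G] (A : Subgroup G) : Prop :=
  ∃ (t : ℕ) (f : Fin (t + 1) → Subgroup G),
    f 0 = A ∧ f (Fin.last t) = ⊤ ∧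
      ∀ j : Fin t, f j.castSucc ≤ f j.succ ∧ ((f j.castSucc).subgroupOf (f j.succ)).Normal

section Main
variable {G : Type*} [Group G]

theorem chain_zero_le {t : ℕ} (f : Fin (t + 1) → Subgroup G)
    (hstep : ∀ j : Fin t, f j.castSucc ≤ f j.succ) : ∀ j, f 0 ≤ f j := by
  intro j
  induction j using Fin.induction with
  | zero => exact le_rfl
  | succ j ih => exact ih.trans (hstep j)

theorem restrict_sigmaSubnormal (A D : Subgroup G) (hA : SigmaSubnormal σ A) (hAD : A ≤ D) :
    SigmaSubnormal σ (A.subgroupOf D) := by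
  obtain ⟨t, f, h0, hlast, hstep⟩ := hA
  refine ⟨t, fun j => (f j ⊓ D).subgroupOf D, ?_, ?_, fun j => ?_⟩
  · show (f 0 ⊓ D).subgroupOf D = A.subgroupOf D
    rw [h0, inf_eq_left.mpr hAD]
  · show (f (Fin.last t) ⊓ D).subgroupOf D = ⊤
    rw [hlast, top_inf_eq, Subgroup.subgroupOf_self]
  · refine ⟨Subgroup.comap_mono (inf_le_inf_right D (hstep j).1), ?_⟩
    exact restrict_step σ _ _ D (hstep j).2

theorem subtypeE_map (D : Subgroup G) (B C : Subgroup ↥D) :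
    Subgroup.map (Subgroup.equivMapOfInjective C D.subtype D.subtype_injective).toMonoidHom
        (B.subgroupOf C) = (B.map D.subtype).subgroupOf (C.map D.subtype) := by
  ext x
  simp only [Subgroup.mem_map, Subgroup.mem_subgroupOf]
  constructor
  · rintro ⟨y, hy, rfl⟩
    exact ⟨y, hy, by simp [Subgroup.coe_equivMapOfInjective_apply]⟩
  · rintro ⟨b, hb, hbx⟩
    have hbC : b ∈ C := by
      have := x.2
      simp only [Subgroup.mem_map] at this
      obtain ⟨c, hc, hcx⟩ := this
      have : c = b := D.subtype_injective (by rw [hcx, hbx])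
      rwa [← this]
    refine ⟨⟨b, hbC⟩, hb, ?_⟩
    apply Subtype.ext
    simp [Subgroup.coe_equivMapOfInjective_apply, hbx]

theorem extend_subnormal (D : Subgroup G) [hD : D.Normal] (B : Subgroup ↥D)
    (hB : IsSubnormalIn B) : IsSubnormalIn (B.map D.subtype) := by
  obtain ⟨t, g, h0, hlast, hstep⟩ := hB
  refine ⟨t + 1, Fin.snoc (fun j => (g j).map D.subtype) ⊤, ?_, ?_, fun j => ?_⟩
  · rw [show (0 : Fin (t + 2)) = Fin.castSucc 0 by rfl, Fin.snoc_castSucc, h0]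
  · rw [Fin.snoc_last]
  · refine Fin.lastCases ?_ (fun j' => ?_) j
    · constructor
      · rw [Fin.succ_last, Fin.snoc_last]
        exact le_top
      · rw [Fin.succ_last, Fin.snoc_last, Fin.snoc_castSucc, hlast,
          ← MonoidHom.range_eq_map, Subgroup.range_subtype]
        infer_instance
    · have e1 : (Fin.castSucc j').castSucc = Fin.castSucc j'.castSucc := rfl
      have e2 : (Fin.castSucc j').succ = Fin.castSucc j'.succ := (Fin.succ_castSucc j').symm
      rw [e1, e2, Fin.snoc_castSucc, Fin.snoc_castSucc]
      refine ⟨Subgroup.map_mono (hstep j').1, ?_⟩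
      rw [← subtypeE_map]
      exact mapE_normal _ _ (hstep j').2

end Main

theorem topE_map {G : Type*} [Group G] (M : Subgroup G) :
    Subgroup.map (Subgroup.topEquiv : ↥(⊤ : Subgroup G) ≃* G).toMonoidHom (M.subgroupOf ⊤) = M := by
  ext x
  simp only [Subgroup.mem_map, Subgroup.mem_subgroupOf]
  constructor
  · rintro ⟨y, hy, rfl⟩
    exact hy
  · intro hx
    exact ⟨⟨x, trivial⟩, hx, rfl⟩

universe u

theorem key {ι : Type*} (σ : ι → Set ℕ) (n : ℕ) :
    ∀ (G : Type u) [Group G] [Finite G] (A : Subgroup G), Nat.card G ≤ n →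
      SigmaSubnormal σ A →
      (∀ (N : Subgroup ↥A) [N.Normal], SigmaNilpotent σ (↥A ⧸ N) → N = ⊤) →
      IsSubnormalIn A := by
  induction n with
  | zero =>
    intro G _ _ A hcard _ _
    haveI : Nonempty G := ⟨1⟩
    have := Nat.card_pos (α := G)
    omega
  | succ n ih =>
    intro G _ _ A hcard hA hperf
    obtain ⟨t, f, h0, hlast, hstep⟩ := hA
    induction t with
    | zero =>
      have hAtop : A = ⊤ := by
        rw [← h0, show (0 : Fin 1) = Fin.last 0 from rfl, hlast]
      exact ⟨0, fun _ => A, rfl, by rw [hAtop], fun j => j.elim0⟩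
    | succ t iht =>
      by_cases hM : f (Fin.castSucc (Fin.last t)) = ⊤
      · refine iht (f ∘ Fin.castSucc) ?_ ?_ ?_
        · exact h0
        · exact hM
        · intro j
          have h := hstep j.castSucc
          rw [Fin.succ_castSucc] at h
          exact h
      · set M := f (Fin.castSucc (Fin.last t)) with hMdef
        have hAM : A ≤ M := by
          rw [← h0]
          exact chain_zero_le f (fun j => (hstep j).1) _
        have htop := (hstep (Fin.last t)).2
        rw [Fin.succ_last, hlast] at htop
        have hMcond : StepCond σ M := by
          have h2 := (stepCond_mapE_iff σ Subgroup.topEquiv (M.subgroupOf ⊤)).mpr htop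
          rwa [topE_map] at h2
        have common : ∀ (D : Subgroup G), D.Normal → D ≠ ⊤ → A ≤ D → IsSubnormalIn A := by
          intro D hDn hDne hAD
          haveI := hDn
          have hsub' : SigmaSubnormal σ (A.subgroupOf D) :=
            restrict_sigmaSubnormal σ A D ⟨t + 1, f, h0, hlast, hstep⟩ hAD
          have hperf' := perfect_of_mulEquiv σ (Subgroup.subgroupOfEquivOfLe hAD) hperf
          have hcard' : Nat.card ↥D ≤ n := by
            haveI : Nonempty G := ⟨1⟩
            have hdvd := Subgroup.card_subgroup_dvd_card D
            have hpos := Nat.card_pos (α := G)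
            have hle := Nat.le_of_dvd hpos hdvd
            have hne : Nat.card ↥D ≠ Nat.card G := fun heq => hDne (Subgroup.eq_top_of_card_eq D heq)
            omega
          have hsn := ih ↥D (A.subgroupOf D) hcard' hsub' hperf'
          have hext := extend_subnormal D _ hsn
          rwa [Subgroup.subgroupOf_map_subtype, inf_eq_left.mpr hAD] at hext
        rcases hMcond with hMn | hpr
        · exact common M hMn hM hAM
        · have hDne : M.normalCore ≠ ⊤ := fun h => hM (top_le_iff.mp (h ▸ M.normalCore_le))
          have hAD : A ≤ M.normalCore := by
            haveI : (M.normalCore.subgroupOf A).Normal := inferInstance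
            have hq : SigmaNilpotent σ (↥A ⧸ M.normalCore.subgroupOf A) := by
              apply sigmaNilpotent_of_isSigmaPrimary
              refine isSigmaPrimaryNat_of_dvd σ hpr ?_
              show Nat.card (↥A ⧸ M.normalCore.subgroupOf A) ∣ M.normalCore.index
              have h1 : Nat.card (↥A ⧸ M.normalCore.subgroupOf A) =
                  (M.normalCore.subgroupOf A).index := rfl
              rw [h1]
              exact Subgroup.relIndex_dvd_index_of_normal (H := M.normalCore) A
            have := hperf _ hq
            exact Subgroup.subgroupOf_eq_top.mp this
          exact common M.normalCore inferInstance hDne hAD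

end SigmaAux
/-- If `A` is a `σ`-subnormal subgroup of a finite group `G` and `A` is
`σ`-perfect (i.e. `A` has no proper normal subgroup with `σ`-nilpotent quotient, so
`A^{𝔑_σ} = A`), then `A` is subnormal in `G`. -/
theorem sigmaSubnormal_subnormal_of_sigmaPerfect {ι : Type*} (σ : ι → Set ℕ)
    (hσ : IsPrimePartition σ) (G : Type*) [Group G] [Finite G]
    (A : Subgroup G) (hA : SigmaSubnormal σ A)
    (hperf : ∀ (N : Subgroup ↥A) [N.Normal], SigmaNilpotent σ (↥A ⧸ N) → N = ⊤) :
    IsSubnormalIn A := by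
  exact SigmaAux.key σ (Nat.card G) G A le_rfl hA hperf
end

section
/- If a finite σ-soluble group G has three Π-closed subgroups A, B, C whose indices |G:A|, |G:B|, |G:C| are pairwise σ-coprime, then G is Π-closed. -/
open Pointwise

section Helpers

variable {G : Type*} [Group G]

lemma myCardMulRelindex {H K : Subgroup G} (h : H ≤ K) :
    Nat.card H * H.relIndex K = Nat.card K := by
  have h1 := Subgroup.card_mul_index (H.subgroupOf K)
  rwa [Nat.card_congr (Subgroup.subgroupOfEquivOfLe h).toEquiv] at h1

lemma myRelindexPos [Finite G] (H K : Subgroup G) : H.relIndex K ≠ 0 :=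
  Subgroup.index_ne_zero_of_finite

lemma myRelindexDvdIndexNormalRight [Finite G] (H K : Subgroup G) [K.Normal] :
    H.relIndex K ∣ H.index := by
  have e1 : (H ⊓ K).relIndex H * H.relIndex (H ⊔ K) = (H ⊓ K).relIndex (H ⊔ K) :=
    Subgroup.relIndex_mul_relIndex _ _ _ inf_le_left le_sup_left
  have e2 : (H ⊓ K).relIndex K * K.relIndex (H ⊔ K) = (H ⊓ K).relIndex (H ⊔ K) :=
    Subgroup.relIndex_mul_relIndex _ _ _ inf_le_right le_sup_right
  have e3 : (H ⊓ K).relIndex H = K.relIndex H := Subgroup.inf_relIndex_left H K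
  have e4 : K.relIndex (H ⊔ K) = K.relIndex H := Subgroup.relIndex_sup_right H K
  have e5 : (H ⊓ K).relIndex K = H.relIndex K := Subgroup.inf_relIndex_right H K
  have hcanc : K.relIndex H * H.relIndex (H ⊔ K) = K.relIndex H * H.relIndex K :=
    calc K.relIndex H * H.relIndex (H ⊔ K)
        = (H ⊓ K).relIndex H * H.relIndex (H ⊔ K) := by rw [e3]
      _ = (H ⊓ K).relIndex (H ⊔ K) := e1
      _ = (H ⊓ K).relIndex K * K.relIndex (H ⊔ K) := e2.symm
      _ = H.relIndex K * K.relIndex H := by rw [e4, e5]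
      _ = K.relIndex H * H.relIndex K := mul_comm _ _
  have hne : K.relIndex H ≠ 0 := myRelindexPos K H
  have : H.relIndex (H ⊔ K) = H.relIndex K := mul_left_cancel₀ hne hcanc
  exact this ▸ Subgroup.relIndex_dvd_index_of_le le_sup_left

lemma myRelindexDvdRelindexRight [Finite G] {N C K : Subgroup G} [N.Normal]
    (hNK : N ≤ K) (hCK : C ≤ K) : N.relIndex C ∣ N.relIndex K := by
  have e : N.relIndex (C ⊔ N) = N.relIndex C := Subgroup.relIndex_sup_right C N
  have h2 : N.relIndex (C ⊔ N) * (C ⊔ N).relIndex K = N.relIndex K :=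
    Subgroup.relIndex_mul_relIndex _ _ _ le_sup_right (sup_le hCK hNK)
  exact ⟨(C ⊔ N).relIndex K, by rw [← e, h2]⟩

lemma myCardDvdOfSurjective {H K : Type*} [Group H] [Group K] [Finite H]
    (f : H →* K) (hf : Function.Surjective f) : Nat.card K ∣ Nat.card H := by
  rw [← Nat.card_congr (QuotientGroup.quotientKerEquivOfSurjective f hf).toEquiv]
  exact Subgroup.index_dvd_card f.ker

lemma myConjMapEq {H : Subgroup G} (hH : H.Normal) (g : G) :
    H.map (MulAut.conj g).toMonoidHom = H := by
  ext y
  simp only [Subgroup.mem_map]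
  constructor
  · rintro ⟨x, hx, rfl⟩
    exact hH.conj_mem x hx g
  · intro hy
    refine ⟨g⁻¹ * y * g, ?_, ?_⟩
    · have := hH.conj_mem y hy g⁻¹
      simpa using this
    · simp [MulAut.conj]
      group


lemma myOpiSpec (π : Set ℕ) (G : Type*) [Group G] [Finite G] :
    (OPi π G).Normal ∧ ∀ p : ℕ, p.Prime → p ∣ Nat.card (OPi π G) → p ∈ π := by
  classical
  set pred : Subgroup G → Prop :=
    fun N => N.Normal ∧ ∀ p : ℕ, p.Prime → p ∣ Nat.card N → p ∈ π with hpred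
  have hstep : ∀ H, pred H → ∀ K, pred K → pred (H ⊔ K) := by
    rintro H ⟨hHn, hHp⟩ K ⟨hKn, hKp⟩
    haveI := hHn; haveI := hKn
    refine ⟨inferInstance, ?_⟩
    intro p hp hdvd
    have e1 : Nat.card ↥K * K.relIndex (H ⊔ K) = Nat.card ↥(H ⊔ K) :=
      myCardMulRelindex le_sup_right
    have e2 : K.relIndex (H ⊔ K) = K.relIndex H := Subgroup.relIndex_sup_right H K
    have e3 : K.relIndex H ∣ Nat.card H := Subgroup.index_dvd_card _
    rw [← e1, e2] at hdvd
    rcases hp.dvd_mul.mp hdvd with h | h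
    · exact hKp p hp h
    · exact hHp p hp (h.trans e3)
  have hbot : pred ⊥ := by
    refine ⟨inferInstance, ?_⟩
    intro p hp hdvd
    rw [Subgroup.card_bot] at hdvd
    exact absurd (Nat.dvd_one.mp hdvd) hp.ne_one
  have hfin : {N : Subgroup G | pred N}.Finite := Set.toFinite _
  have hOPi : OPi π G = hfin.toFinset.sup id := by
    rw [OPi, Finset.sup_id_eq_sSup, hfin.coe_toFinset]
    exact sSup_eq_iSup.symm
  have := Finset.sup_induction (s := hfin.toFinset) (f := id) (p := pred) hbot hstep
    (fun b hb => (hfin.mem_toFinset.mp hb))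
  rwa [← hOPi] at this

lemma myLeOpi {π : Set ℕ} {G : Type*} [Group G] {H : Subgroup G} (hn : H.Normal)
    (hp : ∀ p : ℕ, p.Prime → p ∣ Nat.card H → p ∈ π) : H ≤ OPi π G :=
  le_iSup₂ (f := fun (N : Subgroup G) (_ : N ∈ {N : Subgroup G | N.Normal ∧ ∀ p : ℕ, Nat.Prime p → p ∣ Nat.card ↥N → p ∈ π}) => N) H ⟨hn, hp⟩

lemma myPiClosedOfGoodHall {π : Set ℕ} {G : Type*} [Group G] [Finite G]
    (h : ∃ H : Subgroup G, H.Normal ∧ (∀ p : ℕ, p.Prime → p ∣ Nat.card H → p ∈ π) ∧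
      (∀ p : ℕ, p.Prime → p ∣ H.index → p ∉ π)) : PiClosed π G := by
  obtain ⟨H, hn, hpg, hidx⟩ := h
  intro p hp hdvd
  exact hidx p hp (hdvd.trans (Subgroup.index_dvd_of_le (myLeOpi hn hpg)))

lemma myPiClosedOfSurjective {π : Set ℕ} {G G' : Type*} [Group G] [Group G'] [Finite G]
    (f : G →* G') (hf : Function.Surjective f) (h : PiClosed π G) : PiClosed π G' := by
  haveI : Finite G' := Finite.of_surjective f hf
  obtain ⟨hOn, hOp⟩ := myOpiSpec π G
  set M := OPi π G
  have hMn' : (M.map f).Normal := hOn.map f hf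
  have hMp' : ∀ p : ℕ, p.Prime → p ∣ Nat.card (M.map f) → p ∈ π := by
    intro p hp hdvd
    exact hOp p hp (hdvd.trans (myCardDvdOfSurjective (f.subgroupMap M)
      (f.subgroupMap_surjective M)))
  intro p hp hdvd
  have h1 : (OPi π G').index ∣ (M.map f).index := Subgroup.index_dvd_of_le (myLeOpi hMn' hMp')
  have h2 : (M.map f).index = ((M.map f).comap f).index :=
    ((M.map f).index_comap_of_surjective hf).symm
  have h3 : ((M.map f).comap f).index ∣ M.index :=
    Subgroup.index_dvd_of_le (Subgroup.le_comap_map f M)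
  exact h p hp (hdvd.trans (h1.trans (h2 ▸ h3)))


lemma mySolubleQuotient {ι : Type*} {σ : ι → Set ℕ} {G : Type*} [Group G]
    (N : Subgroup G) [N.Normal] (hsol : SigmaSoluble σ G) : SigmaSoluble σ (G ⧸ N) := by
  rintro K' H' ⟨hK'n, hH'n, hlt, hmax⟩
  set φ := QuotientGroup.mk' N with hφdef
  have hφ : Function.Surjective φ := QuotientGroup.mk'_surjective N
  have hker : φ.ker = N := QuotientGroup.ker_mk' N
  have hcm : ∀ L' : Subgroup (G ⧸ N), (L'.comap φ).map φ = L' := fun L' =>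
    Subgroup.map_comap_eq_self_of_surjective hφ L'
  set K := K'.comap φ with hK
  set H := H'.comap φ with hH
  have hKn : K.Normal := hK'n.comap φ
  have hHn : H.Normal := hH'n.comap φ
  have hchief : IsChiefFactor G K H := by
    refine ⟨hKn, hHn, ?_, ?_⟩
    · refine lt_of_le_of_ne (Subgroup.comap_mono hlt.le) ?_
      intro h
      have h2 := congrArg (Subgroup.map φ) h
      rw [hK, hH, hcm, hcm] at h2
      exact hlt.ne h2
    · intro L hLn hKL hLH
      have hNK : N ≤ K := by
        intro x hx
        have hx1 : φ x = 1 := by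
          rw [hφdef, QuotientGroup.mk'_apply, QuotientGroup.eq_one_iff]
          exact hx
        exact Subgroup.mem_comap.mpr (by rw [hx1]; exact K'.one_mem)
      have hkerL : φ.ker ≤ L := by rw [hker]; exact hNK.trans hKL
      have hmapn : (L.map φ).Normal := hLn.map φ hφ
      have h1 : K' ≤ L.map φ := by
        calc K' = (K'.comap φ).map φ := (hcm K').symm
          _ ≤ L.map φ := Subgroup.map_mono hKL
      have h2 : L.map φ ≤ H' := by
        calc L.map φ ≤ (H'.comap φ).map φ := Subgroup.map_mono hLH
          _ = H' := hcm H'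
      rcases hmax (L.map φ) hmapn h1 h2 with h | h
      · left
        rw [← Subgroup.comap_map_eq_self hkerL, h, hK]
      · right
        rw [← Subgroup.comap_map_eq_self hkerL, h, hH]
  have hrel : K.relIndex H = K'.relIndex H' := by
    rw [hK, hH, Subgroup.relIndex_comap, hcm]
  rw [← hrel]
  exact hsol K H hchief

lemma myExistsMinimalNormal (G : Type*) [Group G] [Finite G] [Nontrivial G] :
    ∃ N : Subgroup G, IsChiefFactor G ⊥ N := by
  classical
  set T : Set (Subgroup G) := {M | M ≠ ⊥ ∧ M.Normal} with hT
  have hne : T.Nonempty := ⟨⊤, ⟨by simp, inferInstance⟩⟩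
  obtain ⟨N, hNT, hmin⟩ := Set.exists_min_image T (fun M => Nat.card ↥M) (Set.toFinite T) hne
  refine ⟨N, inferInstance, hNT.2, bot_lt_iff_ne_bot.mpr hNT.1, ?_⟩
  intro L hLn _ hLN
  by_cases hL : L = ⊥
  · exact Or.inl hL
  · right
    have hle := hmin L ⟨hL, hLn⟩
    have hcard : Nat.card ↥L ∣ Nat.card ↥N := Subgroup.card_dvd_of_le hLN
    have hpos : 0 < Nat.card ↥L := Nat.card_pos
    have hEq : Nat.card ↥L = Nat.card ↥N := le_antisymm (Nat.le_of_dvd Nat.card_pos hcard) hle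
    apply SetLike.coe_injective
    refine Set.eq_of_subset_of_ncard_le hLN ?_ (Set.toFinite _)
    rw [← Nat.card_coe_set_eq, ← Nat.card_coe_set_eq]
    exact le_of_eq hEq.symm


lemma myAux1 {G : Type*} [Group G] [Finite G] (π : Set ℕ)
    (N K X : Subgroup G) (hNn : N.Normal) (hKn : K.Normal)
    (hNX : N ≤ X) (hX : PiClosed π ↥X)
    (hNpi : ∀ p : ℕ, p.Prime → p ∣ Nat.card ↥N → p ∉ π) :
    ∃ P : Subgroup G, P ≤ Subgroup.centralizer (N : Set G) ∧ P ≤ X ⊓ K ∧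
      ∀ p : ℕ, p.Prime → p ∈ π → ¬ p ∣ P.relIndex (X ⊓ K) := by
  obtain ⟨hMn, hMp⟩ := myOpiSpec π ↥X
  set M := OPi π ↥X with hM
  haveI := hMn
  set K' : Subgroup ↥X := K.subgroupOf X with hK'
  haveI hK'n : K'.Normal := hKn.subgroupOf X
  set I : Subgroup ↥X := M ⊓ K' with hI
  haveI hIn : I.Normal := Subgroup.normal_inf_normal M K'
  set P : Subgroup G := I.map X.subtype with hP
  have hsubinj : Function.Injective X.subtype := X.subtype_injective
  have hPXK : P ≤ X ⊓ K := by
    have h1 : P ≤ K'.map X.subtype := Subgroup.map_mono inf_le_right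
    rw [Subgroup.subgroupOf_map_subtype] at h1
    rw [inf_comm]
    exact h1
  have hcardP : Nat.card ↥P = Nat.card ↥I :=
    (Nat.card_congr (Subgroup.equivMapOfInjective I X.subtype hsubinj).toEquiv).symm
  have hcardQ : Nat.card ↥(X ⊓ K) = Nat.card ↥K' := by
    have e1 : K' = (K ⊓ X).subgroupOf X := (Subgroup.inf_subgroupOf_right K X).symm
    have e2 : Nat.card ↥((K ⊓ X).subgroupOf X) = Nat.card ↥(K ⊓ X) :=
      Nat.card_congr (Subgroup.subgroupOfEquivOfLe inf_le_right).toEquiv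
    rw [e1, e2, inf_comm]
  have hPpos : Nat.card ↥P ≠ 0 := Nat.card_pos.ne'
  have hrel : P.relIndex (X ⊓ K) = I.relIndex K' := by
    have h1 : Nat.card ↥P * P.relIndex (X ⊓ K) = Nat.card ↥(X ⊓ K) := myCardMulRelindex hPXK
    have h2 : Nat.card ↥I * I.relIndex K' = Nat.card ↥K' := myCardMulRelindex inf_le_right
    rw [hcardP] at h1
    rw [← hcardQ] at h2
    exact mul_left_cancel₀ (hcardP ▸ hPpos) (h1.trans h2.symm)
  have hreldvd : P.relIndex (X ⊓ K) ∣ M.index := by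
    rw [hrel, hI, Subgroup.inf_relIndex_right]
    exact Subgroup.relIndex_dvd_index_of_normal M K'
  refine ⟨P, ?_, hPXK, ?_⟩
  · -- P centralizes N
    set N' : Subgroup ↥X := N.subgroupOf X with hN'
    haveI hN'n : N'.Normal := hNn.subgroupOf X
    have hcardN' : Nat.card ↥N' = Nat.card ↥N :=
      Nat.card_congr (Subgroup.subgroupOfEquivOfLe hNX).toEquiv
    have hdisj : Disjoint I N' := by
      rw [Subgroup.disjoint_def]
      intro x hxI hxN
      have ho1 : orderOf x ∣ Nat.card ↥M := by
        have h := orderOf_dvd_natCard (⟨x, (inf_le_left : I ≤ M) hxI⟩ : ↥M)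
        rw [← orderOf_injective M.subtype M.subtype_injective
          ⟨x, (inf_le_left : I ≤ M) hxI⟩] at h
        exact h
      have ho2 : orderOf x ∣ Nat.card ↥N := by
        have h := orderOf_dvd_natCard (⟨x, hxN⟩ : ↥N')
        rw [← orderOf_injective N'.subtype N'.subtype_injective ⟨x, hxN⟩] at h
        rw [← hcardN']
        exact h
      by_contra hne
      have hx1 : orderOf x ≠ 1 := fun h => hne (orderOf_eq_one_iff.mp h)
      obtain ⟨q, hq, hqd⟩ := Nat.exists_prime_and_dvd hx1
      exact hNpi q hq (hqd.trans ho2) (hMp q hq (hqd.trans ho1))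
    have hcomm := Subgroup.commute_of_normal_of_disjoint I N' hIn hN'n hdisj
    intro x hx
    obtain ⟨y, hy, rfl⟩ := hx
    rw [Subgroup.mem_centralizer_iff]
    intro n hn
    have hnX : n ∈ X := hNX hn
    have := hcomm y ⟨n, hnX⟩ hy hn
    exact congrArg Subtype.val this.symm
  · intro p hp hppi hpd
    exact hX p hp (hpd.trans hreldvd) hppi


lemma myCore {G : Type*} [Group G] [Finite G] (π : Set ℕ)
    (N K A B : Subgroup G) (hNn : N.Normal) (hKn : K.Normal) (hNK : N ≤ K)
    (hNpi : ∀ p : ℕ, p.Prime → p ∣ Nat.card ↥N → p ∉ π)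
    (hKNpi : ∀ p : ℕ, p.Prime → p ∣ N.relIndex K → p ∈ π)
    (hGK : ∀ p : ℕ, p.Prime → p ∣ K.index → p ∉ π)
    (hA : PiClosed π ↥A) (hB : PiClosed π ↥B)
    (hNA : Nat.Coprime (Nat.card ↥N) A.index)
    (hNB : Nat.Coprime (Nat.card ↥N) B.index)
    (hABcop : Nat.Coprime A.index B.index) :
    ∃ H : Subgroup G, H.Normal ∧ (∀ p : ℕ, p.Prime → p ∣ Nat.card ↥H → p ∈ π) ∧
      (∀ p : ℕ, p.Prime → p ∣ H.index → p ∉ π) := by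
  haveI := hNn; haveI := hKn
  have hNle : ∀ X : Subgroup G, Nat.Coprime (Nat.card ↥N) X.index → N ≤ X := by
    intro X hcop
    have h1 : X.relIndex N ∣ X.index := myRelindexDvdIndexNormalRight X N
    have h2 : X.relIndex N ∣ Nat.card ↥N := Subgroup.index_dvd_card _
    exact Subgroup.relIndex_eq_one.mp (Nat.dvd_one.mp (hcop ▸ Nat.dvd_gcd h2 h1))
  have hNleA : N ≤ A := hNle A hNA
  have hNleB : N ≤ B := hNle B hNB
  set C : Subgroup G := Subgroup.centralizer (N : Set G) ⊓ K with hC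
  haveI hCn : C.Normal := by
    constructor
    intro c hc g
    obtain ⟨hc1, hc2⟩ := Subgroup.mem_inf.mp hc
    refine Subgroup.mem_inf.mpr ⟨?_, hKn.conj_mem c hc2 g⟩
    rw [Subgroup.mem_centralizer_iff] at hc1 ⊢
    intro n hn
    have hn' : g⁻¹ * n * g ∈ N := by
      have := hNn.conj_mem n hn g⁻¹
      simpa using this
    have hcn := hc1 _ hn'
    calc n * (g * c * g⁻¹) = g * ((g⁻¹ * n * g) * c) * g⁻¹ := by group
      _ = g * (c * (g⁻¹ * n * g)) * g⁻¹ := by rw [hcn]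
      _ = (g * c * g⁻¹) * n := by group
  have hCK : C ≤ K := inf_le_right
  set Z : Subgroup ↥C := N.subgroupOf C with hZ
  haveI hZn : Z.Normal := hNn.subgroupOf C
  have hZcard : Nat.card ↥Z ∣ Nat.card ↥N := by
    rw [hZ, ← Subgroup.inf_subgroupOf_right N C,
      Nat.card_congr (Subgroup.subgroupOfEquivOfLe (inf_le_right : N ⊓ C ≤ C)).toEquiv]
    exact Subgroup.card_dvd_of_le inf_le_left
  have hZidxdvd : Z.index ∣ N.relIndex K := myRelindexDvdRelindexRight hNK hCK
  have hcop : Nat.Coprime (Nat.card ↥Z) Z.index := by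
    rw [Nat.Coprime]
    by_contra h
    obtain ⟨q, hq, hqd⟩ := Nat.exists_prime_and_dvd h
    exact hNpi q hq ((hqd.trans (Nat.gcd_dvd_left _ _)).trans hZcard)
      (hKNpi q hq ((hqd.trans (Nat.gcd_dvd_right _ _)).trans hZidxdvd))
  obtain ⟨H₁, hH₁⟩ := Subgroup.exists_right_complement'_of_coprime hcop
  set m := Z.index with hm
  have hZpos : Nat.card ↥Z ≠ 0 := Nat.card_pos.ne'
  have hcardH₁ : Nat.card ↥H₁ = m := by
    have h1 := hH₁.card_mul
    have h2 := Subgroup.card_mul_index Z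
    exact mul_left_cancel₀ hZpos (h1.trans h2.symm)
  set H₀ : Subgroup G := H₁.map C.subtype with hH₀
  have hH₀C : H₀ ≤ C := Subgroup.map_subtype_le H₁
  have hchar : ∀ x : G, x ∈ H₀ ↔ x ∈ C ∧ x ^ m = 1 := by
    intro x
    constructor
    · rintro ⟨y, hy, rfl⟩
      refine ⟨y.2, ?_⟩
      have h := orderOf_dvd_natCard (⟨y, hy⟩ : ↥H₁)
      rw [← orderOf_injective H₁.subtype H₁.subtype_injective ⟨y, hy⟩] at h
      rw [hcardH₁] at h
      have h3 : y ^ m = 1 := orderOf_dvd_iff_pow_eq_one.mp h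
      have := congrArg C.subtype h3
      simpa using this
    · rintro ⟨hxC, hxm⟩
      set c : ↥C := ⟨x, hxC⟩ with hcdef
      have hcm : c ^ m = 1 := by
        apply Subtype.ext
        simpa using hxm
      obtain ⟨zh, hzh⟩ := (hH₁.existsUnique c).exists
      have hzZ : (zh.1 : ↥C) ∈ Z := zh.1.2
      have hhH : (zh.2 : ↥C) ∈ H₁ := zh.2.2
      have hzN : ((zh.1 : ↥C) : G) ∈ N := Subgroup.mem_subgroupOf.mp hzZ
      have hcomm2 : Commute (zh.1 : ↥C) (zh.2 : ↥C) := by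
        have hcent : ∀ z : ↥C, (z : G) ∈ N → ∀ d : ↥C, z * d = d * z := by
          intro z hz d
          have hd := (Subgroup.mem_inf.mp d.2).1
          rw [Subgroup.mem_centralizer_iff] at hd
          exact Subtype.ext (hd (z : G) hz)
        exact hcent _ hzN _
      have hpow : (zh.1 : ↥C) ^ m * (zh.2 : ↥C) ^ m = 1 := by
        rw [← hcomm2.mul_pow, hzh, hcm]
      have hzZm : (zh.1 : ↥C) ^ m ∈ Z := Z.pow_mem hzZ m
      have hzHm : (zh.1 : ↥C) ^ m ∈ H₁ := by
        have : (zh.1 : ↥C) ^ m = ((zh.2 : ↥C) ^ m)⁻¹ := eq_inv_of_mul_eq_one_left hpow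
        rw [this]
        exact H₁.inv_mem (H₁.pow_mem hhH m)
      have hzm1 : (zh.1 : ↥C) ^ m = 1 := by
        have hd := hH₁.disjoint
        rw [Subgroup.disjoint_def] at hd
        exact hd hzZm hzHm
      have hoz : orderOf (zh.1 : ↥C) ∣ m := orderOf_dvd_iff_pow_eq_one.mpr hzm1
      have hoz2 : orderOf (zh.1 : ↥C) ∣ Nat.card ↥Z := by
        have h := orderOf_dvd_natCard (⟨(zh.1 : ↥C), hzZ⟩ : ↥Z)
        rw [← orderOf_injective Z.subtype Z.subtype_injective ⟨(zh.1 : ↥C), hzZ⟩] at h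
        exact h
      have hz1 : (zh.1 : ↥C) = 1 :=
        orderOf_eq_one_iff.mp (Nat.dvd_one.mp (hcop ▸ Nat.dvd_gcd hoz2 hoz))
      have hch : (zh.2 : ↥C) = c := by rw [← hzh, hz1, one_mul]
      exact ⟨(zh.2 : ↥C), hhH, by rw [hch]; rfl⟩
  haveI hH₀n : H₀.Normal := by
    constructor
    intro x hx g
    obtain ⟨hxC, hxm⟩ := (hchar x).mp hx
    refine (hchar _).mpr ⟨hCn.conj_mem x hxC g, ?_⟩
    rw [conj_pow, hxm, mul_one, mul_inv_cancel]
  have hcardH₀ : Nat.card ↥H₀ = m := by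
    rw [hH₀, ← hcardH₁]
    exact (Nat.card_congr (Subgroup.equivMapOfInjective H₁ C.subtype C.subtype_injective).toEquiv).symm
  have hH₁pos : Nat.card ↥H₁ ≠ 0 := Nat.card_pos.ne'
  have hrelH₀C : H₀.relIndex C = Nat.card ↥Z := by
    have h1 : Nat.card ↥H₀ * H₀.relIndex C = Nat.card ↥C := myCardMulRelindex hH₀C
    have h2 : Nat.card ↥Z * Nat.card ↥H₁ = Nat.card ↥C := hH₁.card_mul
    rw [hcardH₀, ← hcardH₁] at h1
    apply mul_left_cancel₀ hH₁pos
    rw [h1, ← h2, mul_comm]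
  have hidx : H₀.index = H₀.relIndex C * (C.relIndex K * K.index) := by
    rw [Subgroup.relIndex_mul_index hCK]
    exact (Subgroup.relIndex_mul_index hH₀C).symm
  have hCKpi : ∀ p : ℕ, p.Prime → p ∈ π → ¬ p ∣ C.relIndex K := by
    intro p hp hppi hpdvd
    have hor : ¬ p ∣ A.index ∨ ¬ p ∣ B.index := by
      by_contra h
      push_neg at h
      exact hp.ne_one (Nat.dvd_one.mp (hABcop ▸ Nat.dvd_gcd h.1 h.2))
    have hgen : ∀ X : Subgroup G, PiClosed π ↥X → N ≤ X → ¬ p ∣ X.index → False := by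
      intro X hXpc hNX hpX
      obtain ⟨P, hPcent, hPXK, hPrel⟩ := myAux1 π N K X hNn hKn hNX hXpc hNpi
      have hPC' : P ≤ C := le_inf (hPXK.trans (le_trans inf_le_right (le_refl K)) |> fun _ => hPcent) (hPXK.trans inf_le_right)
      have hXKK : (X ⊓ K).relIndex K ∣ X.index := by
        rw [Subgroup.inf_relIndex_right]
        exact myRelindexDvdIndexNormalRight X K
      have e1 : Nat.card ↥P * P.relIndex (X ⊓ K) = Nat.card ↥(X ⊓ K) := myCardMulRelindex hPXK
      have e2 : Nat.card ↥(X ⊓ K) * (X ⊓ K).relIndex K = Nat.card ↥K := myCardMulRelindex inf_le_right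
      have e3 : Nat.card ↥C * C.relIndex K = Nat.card ↥K := myCardMulRelindex hCK
      have hb : ¬ p ∣ P.relIndex (X ⊓ K) := hPrel p hp hppi
      have hc : ¬ p ∣ (X ⊓ K).relIndex K := fun h => hpX (h.trans hXKK)
      have hPpos : Nat.card ↥P ≠ 0 := Nat.card_pos.ne'
      have hXKpos : Nat.card ↥(X ⊓ K) ≠ 0 := Nat.card_pos.ne'
      have hCpos : Nat.card ↥C ≠ 0 := Nat.card_pos.ne'
      have hrel1pos : P.relIndex (X ⊓ K) ≠ 0 := myRelindexPos _ _
      have hrel2pos : (X ⊓ K).relIndex K ≠ 0 := myRelindexPos _ _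
      have hrel3pos : C.relIndex K ≠ 0 := myRelindexPos _ _
      have hKfact : (Nat.card ↥K).factorization p = (Nat.card ↥P).factorization p := by
        rw [← e2, ← e1, Nat.factorization_mul (mul_ne_zero hPpos hrel1pos) hrel2pos,
          Nat.factorization_mul hPpos hrel1pos]
        simp [Nat.factorization_eq_zero_of_not_dvd hb, Nat.factorization_eq_zero_of_not_dvd hc]
      have h1 : (Nat.card ↥P).factorization p ≤ (Nat.card ↥C).factorization p := by
        have hd : Nat.card ↥P ∣ Nat.card ↥C := Subgroup.card_dvd_of_le hPC'
        exact (Nat.Prime.pow_dvd_iff_le_factorization hp hCpos).mp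
          ((Nat.ordProj_dvd _ p).trans hd)
      have h2 : (Nat.card ↥C).factorization p < (Nat.card ↥K).factorization p := by
        rw [← e3, Nat.factorization_mul hCpos hrel3pos]
        have hpos : 0 < (C.relIndex K).factorization p :=
          hp.factorization_pos_of_dvd hrel3pos hpdvd
        simp only [Finsupp.add_apply]
        omega
      rw [hKfact] at h2
      omega
    rcases hor with h | h
    · exact hgen A hA hNleA h
    · exact hgen B hB hNleB h
  refine ⟨H₀, hH₀n, ?_, ?_⟩
  · intro p hp hd
    rw [hcardH₀] at hd
    exact hKNpi p hp (hd.trans hZidxdvd)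
  · intro p hp hd hppi
    rw [hidx] at hd
    rcases hp.dvd_mul.mp hd with h | h
    · rw [hrelH₀C] at h
      exact hNpi p hp (h.trans hZcard) hppi
    · rcases hp.dvd_mul.mp h with h' | h'
      · exact hCKpi p hp hppi h'
      · exact hGK p hp h' hppi


lemma myMain {ι : Type*} (σ : ι → Set ℕ) (hσ : IsPrimePartition σ) (S : Set ι) :
    ∀ (n : ℕ) (G : Type*) [Group G] [Finite G], Nat.card G ≤ n →
      SigmaSoluble σ G → ∀ A B C : Subgroup G,
      PiClosed (PiPrimes σ S) ↥A → PiClosed (PiPrimes σ S) ↥B →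
      PiClosed (PiPrimes σ S) ↥C →
      SigmaCoprime σ A.index B.index → SigmaCoprime σ A.index C.index →
      SigmaCoprime σ B.index C.index →
      ∃ H : Subgroup G, H.Normal ∧
        (∀ p : ℕ, p.Prime → p ∣ Nat.card ↥H → p ∈ PiPrimes σ S) ∧
        (∀ p : ℕ, p.Prime → p ∣ H.index → p ∉ PiPrimes σ S) := by
  intro n
  induction n with
  | zero =>
    intro G _ _ hle
    have h0 : 0 < Nat.card G := Nat.card_pos
    exact absurd hle (by omega)
  | succ n ih =>
    intro G _ _ hle hsol A B C hA hB hC hAB hAC hBC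
    set π := PiPrimes σ S with hπ
    by_cases hcard1 : Nat.card G = 1
    · refine ⟨⊥, inferInstance, ?_, ?_⟩
      · intro p hp hd
        rw [Subgroup.card_bot] at hd
        exact absurd (Nat.dvd_one.mp hd) hp.ne_one
      · intro p hp hd
        rw [Subgroup.index_bot, hcard1] at hd
        exact absurd (Nat.dvd_one.mp hd) hp.ne_one
    · haveI : Nontrivial G := Finite.one_lt_card_iff_nontrivial.mp
        (by have : 0 < Nat.card G := Nat.card_pos; omega)
      obtain ⟨N, hchief⟩ := myExistsMinimalNormal G
      obtain ⟨hbn, hNn, hNlt, hNmax⟩ := hchief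
      haveI := hNn
      obtain ⟨i, hi⟩ := hsol ⊥ N ⟨hbn, hNn, hNlt, hNmax⟩
      rw [Subgroup.relIndex_bot_left] at hi
      have hNne : N ≠ ⊥ := hNlt.ne'
      have hNcard2 : 1 < Nat.card ↥N := (Subgroup.one_lt_card_iff_ne_bot N).mpr hNne
      set φ := QuotientGroup.mk' N with hφdef
      have hφ : Function.Surjective φ := QuotientGroup.mk'_surjective N
      have hcardQ : Nat.card (G ⧸ N) * Nat.card ↥N = Nat.card G :=
        (Subgroup.card_eq_card_quotient_mul_card_subgroup N).symm
      have hQle : Nat.card (G ⧸ N) ≤ n := by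
        have hpos : 0 < Nat.card (G ⧸ N) := Nat.card_pos
        have h2 : Nat.card (G ⧸ N) * 2 ≤ Nat.card G := by
          calc Nat.card (G ⧸ N) * 2 ≤ Nat.card (G ⧸ N) * Nat.card ↥N :=
                Nat.mul_le_mul_left _ hNcard2
            _ = Nat.card G := hcardQ
        omega
      have hsol' : SigmaSoluble σ (G ⧸ N) := mySolubleQuotient N hsol
      have hmap : ∀ X : Subgroup G, PiClosed π ↥X → PiClosed π ↥(X.map φ) := fun X hX =>
        myPiClosedOfSurjective (φ.subgroupMap X) (φ.subgroupMap_surjective X) hX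
      have hidxdvd : ∀ X : Subgroup G, (X.map φ).index ∣ X.index := by
        intro X
        rw [← (X.map φ).index_comap_of_surjective hφ]
        exact Subgroup.index_dvd_of_le (Subgroup.le_comap_map φ X)
      have hcoptrans : ∀ (a b a' b' : ℕ), a' ∣ a → b' ∣ b →
          SigmaCoprime σ a b → SigmaCoprime σ a' b' := by
        intro a b a' b' ha hb h j p q hp hq hpa hqb hpj hqj
        exact h j p q hp hq (hpa.trans ha) (hqb.trans hb) hpj hqj
      obtain ⟨H', hH'n, hH'pi, hH'idx⟩ := ih (G ⧸ N) hQle hsol'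
        (A.map φ) (B.map φ) (C.map φ) (hmap A hA) (hmap B hB) (hmap C hC)
        (hcoptrans _ _ _ _ (hidxdvd A) (hidxdvd B) hAB)
        (hcoptrans _ _ _ _ (hidxdvd A) (hidxdvd C) hAC)
        (hcoptrans _ _ _ _ (hidxdvd B) (hidxdvd C) hBC)
      haveI := hH'n
      set K := H'.comap φ with hK
      haveI hKn : K.Normal := hH'n.comap φ
      have hNleK : N ≤ K := by
        intro x hx
        refine Subgroup.mem_comap.mpr ?_
        have hx1 : φ x = 1 := by
          rw [hφdef, QuotientGroup.mk'_apply, QuotientGroup.eq_one_iff]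
          exact hx
        rw [hx1]
        exact H'.one_mem
      have hKidx : K.index = H'.index := H'.index_comap_of_surjective hφ
      have hKidxpi : ∀ p : ℕ, p.Prime → p ∣ K.index → p ∉ π := by
        intro p hp hd
        rw [hKidx] at hd
        exact hH'idx p hp hd
      have hNne0 : Nat.card ↥N ≠ 0 := Nat.card_pos.ne'
      have hidxne : H'.index ≠ 0 := Subgroup.index_ne_zero_of_finite
      have e3 : Nat.card ↥N * N.relIndex K = Nat.card ↥K := myCardMulRelindex hNleK
      have hrelNK : N.relIndex K = Nat.card ↥H' := by
        have e1 : Nat.card ↥K * K.index = Nat.card G := Subgroup.card_mul_index K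
        have e2 : Nat.card ↥H' * H'.index = Nat.card (G ⧸ N) := Subgroup.card_mul_index H'
        have e4 : Nat.card ↥K * H'.index = Nat.card ↥H' * H'.index * Nat.card ↥N := by
          calc Nat.card ↥K * H'.index = Nat.card ↥K * K.index := by rw [hKidx]
            _ = Nat.card G := e1
            _ = Nat.card (G ⧸ N) * Nat.card ↥N := hcardQ.symm
            _ = Nat.card ↥H' * H'.index * Nat.card ↥N := by rw [← e2]
        have e5 : Nat.card ↥K = Nat.card ↥H' * Nat.card ↥N := by
          have := e4
          rw [mul_comm (Nat.card ↥H' * H'.index) (Nat.card ↥N)] at this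
          have h6 : Nat.card ↥K * H'.index = Nat.card ↥H' * Nat.card ↥N * H'.index := by
            rw [e4]; ring
          exact mul_right_cancel₀ hidxne h6
        apply mul_left_cancel₀ hNne0
        rw [e3, e5]
        ring
      have hrelpi : ∀ p : ℕ, p.Prime → p ∣ N.relIndex K → p ∈ π := by
        intro p hp hd
        rw [hrelNK] at hd
        exact hH'pi p hp hd
      by_cases hiS : i ∈ S
      · refine ⟨K, hKn, ?_, hKidxpi⟩
        intro p hp hd
        rw [← e3] at hd
        rcases hp.dvd_mul.mp hd with h | h
        · exact Set.mem_biUnion hiS (hi p hp h)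
        · exact hrelpi p hp h
      · have hNpi' : ∀ p : ℕ, p.Prime → p ∣ Nat.card ↥N → p ∉ π := by
          intro p hp hd hpπ
          have hpπ' : p ∈ ⋃ j ∈ S, σ j := hpπ
          obtain ⟨j, hjS, hpj⟩ := Set.mem_iUnion₂.mp hpπ'
          have hij : i ≠ j := fun h => hiS (h ▸ hjS)
          exact Set.disjoint_left.mp (hσ.2.2.1 i j hij) (hi p hp hd) hpj
        set R : Subgroup G → Prop := fun X => ∃ p : ℕ, p.Prime ∧ p ∈ σ i ∧ p ∣ X.index
          with hR
        have hcopN : ∀ X : Subgroup G, ¬ R X → Nat.Coprime (Nat.card ↥N) X.index := by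
          intro X hnR
          rw [Nat.Coprime]
          by_contra h
          obtain ⟨q, hq, hqd⟩ := Nat.exists_prime_and_dvd h
          exact hnR ⟨q, hq, hi q hq (hqd.trans (Nat.gcd_dvd_left _ _)),
            hqd.trans (Nat.gcd_dvd_right _ _)⟩
        have hcopidx : ∀ X Y : Subgroup G, SigmaCoprime σ X.index Y.index →
            Nat.Coprime X.index Y.index := by
          intro X Y h
          rw [Nat.Coprime]
          by_contra hg
          obtain ⟨q, hq, hqd⟩ := Nat.exists_prime_and_dvd hg
          obtain ⟨j, hjq⟩ := hσ.2.2.2 q hq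
          exact h j q q hq hq (hqd.trans (Nat.gcd_dvd_left _ _))
            (hqd.trans (Nat.gcd_dvd_right _ _)) hjq hjq
        have hnotboth : ∀ X Y : Subgroup G, SigmaCoprime σ X.index Y.index →
            R X → R Y → False := by
          rintro X Y h ⟨p, hp, hpi, hpd⟩ ⟨q, hq, hqi, hqd⟩
          exact h i p q hp hq hpd hqd hpi hqi
        by_cases hRA : R A
        · exact myCore π N K B C hNn hKn hNleK hNpi' hrelpi hKidxpi hB hC
            (hcopN B (fun h => hnotboth A B hAB hRA h))
            (hcopN C (fun h => hnotboth A C hAC hRA h)) (hcopidx B C hBC)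
        · by_cases hRB : R B
          · exact myCore π N K A C hNn hKn hNleK hNpi' hrelpi hKidxpi hA hC
              (hcopN A hRA) (hcopN C (fun h => hnotboth B C hBC hRB h)) (hcopidx A C hAC)
          · exact myCore π N K A B hNn hKn hNleK hNpi' hrelpi hKidxpi hA hB
              (hcopN A hRA) (hcopN B hRB) (hcopidx A B hAB)

end Helpers

/-- If a finite `σ`-soluble group `G` has three `Π`-closed subgroups
`A`, `B`, `C` whose indices are pairwise `σ`-coprime, then `G` is `Π`-closed. -/
theorem piClosed_of_three_subgroups {ι : Type*} (σ : ι → Set ℕ)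
    (hσ : IsPrimePartition σ) (G : Type*) [Group G] [Finite G]
    (hsol : SigmaSoluble σ G) (S : Set ι) (hS : S.Nonempty)
    (A B C : Subgroup G)
    (hA : PiClosed (PiPrimes σ S) ↥A) (hB : PiClosed (PiPrimes σ S) ↥B)
    (hC : PiClosed (PiPrimes σ S) ↥C)
    (hAB : SigmaCoprime σ A.index B.index)
    (hAC : SigmaCoprime σ A.index C.index)
    (hBC : SigmaCoprime σ B.index C.index) :
    PiClosed (PiPrimes σ S) G := by
  exact myPiClosedOfGoodHall
    (myMain σ hσ S (Nat.card G) G le_rfl hsol A B C hA hB hC hAB hAC hBC)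
end
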